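/- arXiv:1701.03513 — 6 statements merged into one kernel-verified Lean document; each statement's English description precedes it below -/
import Mathlib

section
/- Let d = m + k with m, k ≥ 1, let Σ be a symmetric positive definite d×d real matrix with block decomposition Σ = [[Σ_mm, Σ_mo],[Σ_om, Σ_oo]], let μ ∈ ℝ^d and b ∈ ℝ^k. Then on the affine subspace {z ∈ ℝ^d : z_obs = b}, the Mahalanobis depth z ↦ D^M(z|μ,Σ) = (1 + (z−μ)ᵀ Σ⁻¹ (z−μ))⁻¹ attains its unique global maximum at the point z* with z*_obs = b and z*_miss = μ_miss + Σ_mo Σ_oo⁻¹ (b − μ_obs) (the conditional-mean imputation of the missing coordinates). -/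
open Matrix

/-- On the affine subspace `{z : z_obs = b}`, the Mahalanobis depth
`z ↦ (1 + (z−μ)ᵀ Σ⁻¹ (z−μ))⁻¹` attains its unique global maximum at the
conditional-mean imputation `z*`. -/
theorem mahalanobis_depth_max_on_affine_subspace
    (m k : ℕ) (hm : 1 ≤ m) (hk : 1 ≤ k)
    (S : Matrix (Fin m ⊕ Fin k) (Fin m ⊕ Fin k) ℝ) (hS : S.PosDef)
    (μ : Fin m ⊕ Fin k → ℝ) (b : Fin k → ℝ) :
    let D : (Fin m ⊕ Fin k → ℝ) → ℝ := fun z => (1 + (z - μ) ⬝ᵥ (S⁻¹ *ᵥ (z - μ)))⁻¹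
    let zstar : Fin m ⊕ Fin k → ℝ :=
      Sum.elim
        (fun i => μ (Sum.inl i) +
          (S.toBlocks₁₂ *ᵥ ((S.toBlocks₂₂)⁻¹ *ᵥ (b - fun j => μ (Sum.inr j)))) i)
        b
    (∀ j, zstar (Sum.inr j) = b j) ∧
    (∀ z : Fin m ⊕ Fin k → ℝ, (∀ j, z (Sum.inr j) = b j) → z ≠ zstar → D z < D zstar) := by
  intro D zstar
  -- S₂₂ is posdef
  have hS22 : (S.toBlocks₂₂).PosDef := by
    refine PosDef.of_dotProduct_mulVec_pos ?_ ?_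
    · exact hS.1.submatrix Sum.inr
    · intro x hx
      have hy : (Sum.elim 0 x : Fin m ⊕ Fin k → ℝ) ≠ 0 := by
        intro h
        apply hx
        funext j
        exact congrFun h (Sum.inr j)
      have := hS.dotProduct_mulVec_pos hy
      convert this using 2
      simp [dotProduct, mulVec, Fintype.sum_sum_type, toBlocks₂₂, dotProduct]
  have hSinv : (S⁻¹).PosDef := hS.inv
  set c : Fin k → ℝ := b - fun j => μ (Sum.inr j) with hc
  set v : Fin k → ℝ := (S.toBlocks₂₂)⁻¹ *ᵥ c with hv
  set w : Fin m ⊕ Fin k → ℝ := Sum.elim 0 v with hw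
  have hSw : S *ᵥ w = zstar - μ := by
    funext x
    cases x with
    | inl i =>
      simp [zstar, mulVec, dotProduct, Fintype.sum_sum_type, hw, toBlocks₁₂, hv, hc]
    | inr j =>
      have h22 : S.toBlocks₂₂ *ᵥ v = c := by
        rw [hv, mulVec_mulVec, mul_nonsing_inv _ (isUnit_iff_isUnit_det _ |>.1 hS22.isUnit), one_mulVec]
      have := congrFun h22 j
      simp only [mulVec, dotProduct, toBlocks₂₂, of_apply] at this
      simp only [zstar, mulVec, dotProduct, Fintype.sum_sum_type, hw, Sum.elim_inr,
        Pi.sub_apply, Sum.elim_inl, Pi.zero_apply, mul_zero, Finset.sum_const_zero, zero_add]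
      rw [this]
      simp [hc]
  have hSiz : S⁻¹ *ᵥ (zstar - μ) = w := by
    rw [← hSw, mulVec_mulVec, nonsing_inv_mul _ (isUnit_iff_isUnit_det _ |>.1 hS.isUnit), one_mulVec]
  refine ⟨fun j => rfl, fun z hz hne => ?_⟩
  set p : Fin m ⊕ Fin k → ℝ := z - zstar with hp
  have hpne : p ≠ 0 := fun h => hne (by simpa [hp, sub_eq_zero] using h)
  have hpw : p ⬝ᵥ w = 0 := by
    rw [hw, dotProduct]
    rw [Fintype.sum_sum_type]
    have h1 : ∀ j : Fin k, p (Sum.inr j) = 0 := by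
      intro j; simp [hp, hz j, zstar]
    simp [h1]
  have hsymm : (S⁻¹)ᵀ = S⁻¹ := by
    have := hSinv.1
    exact isHermitian_iff_isSymm.mp this
  -- Q decomposition
  have hzsplit : z - μ = (zstar - μ) + p := by rw [hp]; ring
  have hcross : (zstar - μ) ⬝ᵥ (S⁻¹ *ᵥ p) = 0 := by
    rw [dotProduct_mulVec, ← mulVec_transpose, hsymm, dotProduct_comm, hSiz]
    exact hpw
  have hcross2 : p ⬝ᵥ (S⁻¹ *ᵥ (zstar - μ)) = 0 := by rw [hSiz]; exact hpw
  have hQ : (z - μ) ⬝ᵥ (S⁻¹ *ᵥ (z - μ)) =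
      (zstar - μ) ⬝ᵥ (S⁻¹ *ᵥ (zstar - μ)) + p ⬝ᵥ (S⁻¹ *ᵥ p) := by
    rw [hzsplit, mulVec_add, add_dotProduct, dotProduct_add, dotProduct_add, hcross, hcross2]
    ring
  have hppos : 0 < p ⬝ᵥ (S⁻¹ *ᵥ p) := by simpa using hSinv.dotProduct_mulVec_pos hpne
  have hQ0 : 0 ≤ (zstar - μ) ⬝ᵥ (S⁻¹ *ᵥ (zstar - μ)) :=
    hSinv.posSemidef.re_dotProduct_nonneg _
  show (1 + (z - μ) ⬝ᵥ (S⁻¹ *ᵥ (z - μ)))⁻¹ < (1 + (zstar - μ) ⬝ᵥ (S⁻¹ *ᵥ (zstar - μ)))⁻¹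
  apply inv_strictAnti₀
  · linarith
  · rw [hQ]; linarith
end

section
/- Let d = m + k with m, k ≥ 1, let Σ be a symmetric positive definite d×d real matrix with block decomposition Σ = [[Σ_mm, Σ_mo],[Σ_om, Σ_oo]], let μ ∈ ℝ^d and b ∈ ℝ^k, and let z ∈ ℝ^d satisfy z_obs = b. Then z satisfies the single-output regression equation z_j = μ_j + Σ_{j,−j} (Σ_{−j,−j})⁻¹ (z_{−j} − μ_{−j}) for every missing coordinate j ∈ {1,…,m} if and only if z_miss = μ_miss + Σ_mo Σ_oo⁻¹ (b − μ_obs), i.e., if and only if z is the multiple-output (multivariate conditional mean) regression imputation. -/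
open Matrix

private lemma sum_split' {n : Type*} [Fintype n] [DecidableEq n]
    {M : Type*} [AddCommMonoid M] (a : n) (g : n → M) :
    ∑ i, g i = g a + ∑ i : {i : n // i ≠ a}, g i.1 := by
  rw [← Finset.add_sum_erase _ g (Finset.mem_univ a)]
  congr 1
  exact (Finset.sum_subtype (p := fun x => x ≠ a) (Finset.univ.erase a)
    (fun x => by simp [Finset.mem_erase, and_comm]) g)

private lemma posDef_submatrix_inj {n l : Type*} [Fintype n] [Fintype l]
    {S : Matrix l l ℝ} (hS : S.PosDef)
    (f : n → l) (hf : Function.Injective f) : (S.submatrix f f).PosDef := by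
  refine Matrix.PosDef.of_dotProduct_mulVec_pos (hS.1.submatrix f) fun x hx => ?_
  classical
  set y : l → ℝ := Function.extend f x 0 with hy
  have hyf : ∀ a, y (f a) = x a := fun a => hf.extend_apply x 0 a
  have hy0 : ∀ i, (∀ a, f a ≠ i) → y i = 0 := by
    intro i hi
    rw [hy, Function.extend_def]
    split_ifs with h
    · exact absurd h.choose_spec (hi _)
    · rfl
  have hkey : ∀ F : l → ℝ, (∀ i, (∀ a, f a ≠ i) → F i = 0) →
      ∑ i, F i = ∑ a, F (f a) := by
    intro F hF
    rw [← Finset.sum_image (f := F) (g := f) (fun a _ b _ h => hf h)]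
    refine (Finset.sum_subset (Finset.subset_univ _) fun i _ hi => ?_).symm
    exact hF i fun a hai => hi (Finset.mem_image.mpr ⟨a, Finset.mem_univ a, hai⟩)
  have hyne : y ≠ 0 := by
    obtain ⟨a, ha⟩ := Function.ne_iff.mp hx
    intro h
    exact ha (by simpa [hyf] using congrFun h (f a))
  have e1 : dotProduct (star y) (S *ᵥ y) = dotProduct (star x) ((S.submatrix f f) *ᵥ x) := by
    simp only [dotProduct, mulVec, Pi.star_apply, star_trivial, submatrix_apply]
    rw [hkey (fun i => y i * ∑ j, S i j * y j) (fun i hi => by simp [hy0 i hi])]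
    refine Finset.sum_congr rfl fun a _ => ?_
    rw [hyf]
    congr 1
    rw [hkey (fun j => S (f a) j * y j) (fun j hj => by simp [hy0 j hj])]
    exact Finset.sum_congr rfl fun b _ => by rw [hyf]
  rw [← e1]
  exact hS.dotProduct_mulVec_pos hyne

private lemma single_eq_iff {n : Type*} [Fintype n] [DecidableEq n]
    {S : Matrix n n ℝ} (hS : S.PosDef) (w : n → ℝ) (a : n) :
    (w a = (fun i : {i : n // i ≠ a} => S a i.1) ⬝ᵥ
        ((S.submatrix (fun i : {i : n // i ≠ a} => i.1)
            (fun i : {i : n // i ≠ a} => i.1))⁻¹ *ᵥ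
          fun i : {i : n // i ≠ a} => w i.1))
    ↔ (S⁻¹ *ᵥ w) a = 0 := by
  classical
  have hdet : IsUnit S.det := hS.det_pos.ne'.isUnit
  set v : n → ℝ := S⁻¹ *ᵥ w with hv
  have hSv : S *ᵥ v = w := by rw [hv, mulVec_mulVec, mul_nonsing_inv _ hdet, one_mulVec]
  set S' : Matrix {i : n // i ≠ a} {i : n // i ≠ a} ℝ :=
    S.submatrix (fun i : {i : n // i ≠ a} => i.1) (fun i : {i : n // i ≠ a} => i.1) with hS'def
  have hS' : S'.PosDef := posDef_submatrix_inj hS _ Subtype.val_injective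
  have hS'det : IsUnit S'.det := hS'.det_pos.ne'.isUnit
  set c : {i : n // i ≠ a} → ℝ := fun i => S a i.1 with hc
  set r : {i : n // i ≠ a} → ℝ := fun i => S i.1 a with hr
  set q : {i : n // i ≠ a} → ℝ := S'⁻¹ *ᵥ r with hq
  have hS'q : S' *ᵥ q = r := by rw [hq, mulVec_mulVec, mul_nonsing_inv _ hS'det, one_mulVec]
  set v' : {i : n // i ≠ a} → ℝ := fun i => v i.1 with hv'
  have key1 : w a = S a a * v a + c ⬝ᵥ v' := by
    rw [← hSv]
    show ∑ x, S a x * v x = _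
    rw [sum_split' a (fun x => S a x * v x)]
    rfl
  have key2 : (fun i : {i : n // i ≠ a} => w i.1) = v a • r + S' *ᵥ v' := by
    funext i
    rw [← hSv]
    show ∑ x, S i.1 x * v x = _
    rw [sum_split' a (fun x => S i.1 x * v x)]
    simp only [Pi.add_apply, Pi.smul_apply, smul_eq_mul]
    rw [mul_comm (S i.1 a)]
    rfl
  have hrhs : c ⬝ᵥ (S'⁻¹ *ᵥ (fun i : {i : n // i ≠ a} => w i.1))
      = v a * (c ⬝ᵥ q) + c ⬝ᵥ v' := by
    rw [key2, mulVec_add, mulVec_smul, dotProduct_add, dotProduct_smul, smul_eq_mul,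
      mulVec_mulVec, nonsing_inv_mul _ hS'det, one_mulVec]
  constructor
  · intro heq
    have hkey : S a a * v a - v a * (c ⬝ᵥ q) = 0 := by
      rw [key1, hrhs] at heq; linarith
    set u : n → ℝ := fun i => if h : i = a then v a else -(v a * q ⟨i, h⟩) with hu
    have hua : u a = v a := by rw [hu]; simp
    have huT : ∀ i : {i : n // i ≠ a}, u i.1 = -(v a * q i) := by
      intro i
      rw [hu]
      simp only [dif_neg i.2]
    have hSu : S *ᵥ u = 0 := by
      funext i0
      show ∑ x, S i0 x * u x = 0
      rw [sum_split' a (fun x => S i0 x * u x)]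
      rcases eq_or_ne i0 a with h | h
      · subst h
        have hsum : ∑ x : {i : n // i ≠ i0}, S i0 x.1 * u x.1 = -(v i0 * (c ⬝ᵥ q)) := by
          rw [show (c ⬝ᵥ q) = ∑ x : {i : n // i ≠ i0}, c x * q x from rfl,
            Finset.mul_sum, ← Finset.sum_neg_distrib]
          refine Finset.sum_congr rfl fun x _ => ?_
          rw [huT x]
          show S i0 x.1 * -(v i0 * q x) = -(v i0 * (S i0 x.1 * q x))
          ring
        rw [hsum, hua]
        linarith [hkey]
      · have hsum : ∑ x : {i : n // i ≠ a}, S i0 x.1 * u x.1 = -(v a * r ⟨i0, h⟩) := by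
          rw [show r ⟨i0, h⟩ = (S' *ᵥ q) ⟨i0, h⟩ from by rw [hS'q],
            show (S' *ᵥ q) ⟨i0, h⟩ = ∑ x : {i : n // i ≠ a}, S i0 x.1 * q x from rfl,
            Finset.mul_sum, ← Finset.sum_neg_distrib]
          refine Finset.sum_congr rfl fun x _ => ?_
          rw [huT x]
          ring
        rw [hsum, hua]
        show S i0 a * v a + -(v a * S i0 a) = 0
        ring
    have hu0 : u = 0 := by
      have h2 : u = S⁻¹ *ᵥ (S *ᵥ u) := by
        rw [mulVec_mulVec, nonsing_inv_mul _ hdet, one_mulVec]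
      rw [h2, hSu, mulVec_zero]
    show v a = 0
    rw [← hua, hu0, Pi.zero_apply]
  · intro h0
    rw [key1, hrhs, show v a = 0 from h0]
    ring

private lemma block_eq_iff {p q : Type*} [Fintype p] [Fintype q] [DecidableEq p] [DecidableEq q]
    {S : Matrix (p ⊕ q) (p ⊕ q) ℝ} (hS : S.PosDef) (w : p ⊕ q → ℝ) :
    (∀ i : p, w (Sum.inl i) = (S.toBlocks₁₂ *ᵥ ((S.toBlocks₂₂)⁻¹ *ᵥ fun j => w (Sum.inr j))) i)
    ↔ ∀ i : p, (S⁻¹ *ᵥ w) (Sum.inl i) = 0 := by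
  classical
  have hdet : IsUnit S.det := hS.det_pos.ne'.isUnit
  set v : p ⊕ q → ℝ := S⁻¹ *ᵥ w with hv
  have hSv : S *ᵥ v = w := by rw [hv, mulVec_mulVec, mul_nonsing_inv _ hdet, one_mulVec]
  set v₁ : p → ℝ := fun i => v (Sum.inl i) with hv₁
  set v₂ : q → ℝ := fun j => v (Sum.inr j) with hv₂
  have hvelim : v = Sum.elim v₁ v₂ := by funext i; cases i <;> rfl
  set A := S.toBlocks₁₁ with hA
  set B := S.toBlocks₁₂ with hB
  set C := S.toBlocks₂₁ with hC
  set D := S.toBlocks₂₂ with hD'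
  have hblk : S = fromBlocks A B C D := (fromBlocks_toBlocks S).symm
  have hD : D.PosDef := posDef_submatrix_inj hS Sum.inr Sum.inr_injective
  have hDdet : IsUnit D.det := hD.det_pos.ne'.isUnit
  have hmul : w = Sum.elim (A *ᵥ v₁ + B *ᵥ v₂) (C *ᵥ v₁ + D *ᵥ v₂) := by
    conv_lhs => rw [← hSv, hblk, hvelim]
    rw [fromBlocks_mulVec, Sum.elim_comp_inl, Sum.elim_comp_inr]
  have hw1 : ∀ i, w (Sum.inl i) = (A *ᵥ v₁ + B *ᵥ v₂) i := fun i => by rw [hmul]; rfl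
  have hw2 : (fun j => w (Sum.inr j)) = C *ᵥ v₁ + D *ᵥ v₂ := funext fun j => by rw [hmul]; rfl
  have hrhs : B *ᵥ (D⁻¹ *ᵥ fun j => w (Sum.inr j))
      = B *ᵥ (D⁻¹ *ᵥ (C *ᵥ v₁)) + B *ᵥ v₂ := by
    have hDD : D⁻¹ *ᵥ (D *ᵥ v₂) = v₂ := by
      rw [mulVec_mulVec, nonsing_inv_mul _ hDdet, one_mulVec]
    rw [hw2, mulVec_add, hDD, mulVec_add]
  constructor
  · intro h
    have h2 : A *ᵥ v₁ = B *ᵥ (D⁻¹ *ᵥ (C *ᵥ v₁)) := by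
      funext i
      have h3 := h i
      rw [hrhs, hw1 i] at h3
      simpa using h3
    have hker : S *ᵥ (Sum.elim v₁ (-(D⁻¹ *ᵥ (C *ᵥ v₁)))) = 0 := by
      conv_lhs => rw [hblk]
      rw [fromBlocks_mulVec, Sum.elim_comp_inl, Sum.elim_comp_inr]
      have e1 : A *ᵥ v₁ + B *ᵥ (-(D⁻¹ *ᵥ (C *ᵥ v₁))) = 0 := by
        rw [mulVec_neg, h2]
        exact add_neg_cancel _
      have e2 : C *ᵥ v₁ + D *ᵥ (-(D⁻¹ *ᵥ (C *ᵥ v₁))) = 0 := by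
        rw [mulVec_neg, mulVec_mulVec, mul_nonsing_inv _ hDdet, one_mulVec]
        exact add_neg_cancel _
      rw [e1, e2]
      exact Sum.elim_zero_zero
    have hu0 : Sum.elim v₁ (-(D⁻¹ *ᵥ (C *ᵥ v₁))) = 0 := by
      have hScancel : ∀ u : p ⊕ q → ℝ, S⁻¹ *ᵥ (S *ᵥ u) = u := fun u => by
        rw [mulVec_mulVec, nonsing_inv_mul _ hdet, one_mulVec]
      rw [← hScancel (Sum.elim v₁ (-(D⁻¹ *ᵥ (C *ᵥ v₁)))), hker, mulVec_zero]
    intro i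
    show v₁ i = 0
    rw [show v₁ i = Sum.elim v₁ (-(D⁻¹ *ᵥ (C *ᵥ v₁))) (Sum.inl i) from rfl, hu0, Pi.zero_apply]
  · intro h i
    have hv10 : v₁ = 0 := funext fun i => h i
    rw [hw1 i, hrhs, hv10]
    simp

/-- For `z` with `z_obs = b`, the single-output regression equations
`z_j = μ_j + Σ_{j,−j} (Σ_{−j,−j})⁻¹ (z_{−j} − μ_{−j})` hold for every missing coordinate `j`
iff `z_miss = μ_miss + Σ_mo Σ_oo⁻¹ (b − μ_obs)` (the multiple-output regression imputation). -/
theorem single_output_iff_multiple_output_regression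
    (m k : ℕ) (hm : 1 ≤ m) (hk : 1 ≤ k)
    (S : Matrix (Fin m ⊕ Fin k) (Fin m ⊕ Fin k) ℝ) (hS : S.PosDef)
    (μ : Fin m ⊕ Fin k → ℝ) (b : Fin k → ℝ)
    (z : Fin m ⊕ Fin k → ℝ) (hz : ∀ j, z (Sum.inr j) = b j) :
    (∀ j0 : Fin m,
      z (Sum.inl j0) = μ (Sum.inl j0) +
        (fun i : {i : Fin m ⊕ Fin k // i ≠ Sum.inl j0} => S (Sum.inl j0) i.1) ⬝ᵥ
          ((S.submatrix (fun i : {i : Fin m ⊕ Fin k // i ≠ Sum.inl j0} => i.1)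
              (fun i : {i : Fin m ⊕ Fin k // i ≠ Sum.inl j0} => i.1))⁻¹ *ᵥ
            fun i : {i : Fin m ⊕ Fin k // i ≠ Sum.inl j0} => z i.1 - μ i.1))
    ↔ (∀ i : Fin m, z (Sum.inl i) = μ (Sum.inl i) +
        (S.toBlocks₁₂ *ᵥ ((S.toBlocks₂₂)⁻¹ *ᵥ (b - fun j => μ (Sum.inr j)))) i) := by
  classical
  have hb : (b - fun j => μ (Sum.inr j)) = (fun j => z (Sum.inr j) - μ (Sum.inr j)) := by
    funext j
    simp [hz j]
  rw [hb]
  constructor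
  · intro h
    have hv : ∀ i : Fin m, ((S⁻¹ *ᵥ fun i => z i - μ i) (Sum.inl i) = 0) := by
      intro j0
      apply (single_eq_iff hS (fun i => z i - μ i) (Sum.inl j0)).mp

      linarith [h j0]
    have hm2 := (block_eq_iff hS (fun i => z i - μ i)).mpr hv
    intro i
    have h5 := hm2 i

    linarith [h5]
  · intro h j0
    have hv : ∀ i : Fin m, ((S⁻¹ *ᵥ fun i => z i - μ i) (Sum.inl i) = 0) := by
      apply (block_eq_iff hS (fun i => z i - μ i)).mp
      intro i

      linarith [h i]
    have h5 := (single_eq_iff hS (fun i => z i - μ i) (Sum.inl j0)).mpr (hv j0)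

    linarith [h5]
end

section
/- Let M be a symmetric invertible d×d real matrix, let z, a ∈ ℝ^d satisfy aᵀ M⁻¹ z = 0, and let c ∈ ℝ. Then det(M + z aᵀ + a zᵀ + c·a aᵀ) = det(M) · (1 + c·(aᵀ M⁻¹ a) − (aᵀ M⁻¹ a)(zᵀ M⁻¹ z)). -/
open Matrix

/-- If `M` is symmetric invertible and `aᵀ M⁻¹ z = 0`, then
`det(M + z aᵀ + a zᵀ + c·a aᵀ) = det(M)·(1 + c·(aᵀ M⁻¹ a) − (aᵀ M⁻¹ a)(zᵀ M⁻¹ z))`. -/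
theorem det_rank_two_update
    (d : ℕ) (M : Matrix (Fin d) (Fin d) ℝ) (hsym : M.IsSymm) (hinv : IsUnit M.det)
    (z a : Fin d → ℝ) (h : a ⬝ᵥ (M⁻¹ *ᵥ z) = 0) (c : ℝ) :
    (M + vecMulVec z a + vecMulVec a z + c • vecMulVec a a).det
      = M.det * (1 + c * (a ⬝ᵥ (M⁻¹ *ᵥ a)) - (a ⬝ᵥ (M⁻¹ *ᵥ a)) * (z ⬝ᵥ (M⁻¹ *ᵥ z))) := by
  set N := M⁻¹ with hN
  have hMN : M * N = 1 := mul_nonsing_inv M hinv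
  have hNsym : N.IsSymm := by
    unfold N
    rw [Matrix.IsSymm, transpose_nonsing_inv, hsym.eq]
  -- z ⬝ (N *ᵥ a) = 0 too, by symmetry of N
  have h2 : z ⬝ᵥ (N *ᵥ a) = 0 := by
    have : z ⬝ᵥ (N *ᵥ a) = a ⬝ᵥ (N *ᵥ z) := by
      rw [dotProduct_mulVec, ← mulVec_transpose, hNsym.eq, dotProduct_comm]
    rw [this, h]
  set A : Matrix (Fin d) (Fin 2) ℝ :=
    Matrix.of (fun i j => if j = 0 then (N *ᵥ z) i else (N *ᵥ a) i) with hA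
  set B : Matrix (Fin 2) (Fin d) ℝ :=
    Matrix.of (fun j i => if j = 0 then a i else z i + c * a i) with hB
  have key : M + vecMulVec z a + vecMulVec a z + c • vecMulVec a a = M * (1 + A * B) := by
    rw [mul_add, mul_one, ← Matrix.mul_assoc M A B]
    have hv1 : M *ᵥ (N *ᵥ z) = z := by rw [mulVec_mulVec, hMN, one_mulVec]
    have hv2 : M *ᵥ (N *ᵥ a) = a := by rw [mulVec_mulVec, hMN, one_mulVec]
    have hMA : M * A = Matrix.of (fun i j => if j = 0 then z i else a i) := by
      ext i j
      have hre : (M * A) i j = (M *ᵥ (fun k => A k j)) i := rfl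
      by_cases hj : j = 0
      · subst hj
        have hc : (fun k => A k (0 : Fin 2)) = N *ᵥ z := by funext k; simp [hA]
        simp [hre, hc, hv1]
      · have hc : (fun k => A k j) = N *ᵥ a := by funext k; simp [hA, hj]
        simp [hre, hc, hv2, hj]
    rw [hMA]
    ext i j
    simp only [hB, Matrix.add_apply, mul_apply, Matrix.of_apply, vecMulVec_apply, Matrix.smul_apply,
      smul_eq_mul, Fin.sum_univ_two]
    simp
    ring
  rw [key, det_mul, det_one_add_mul_comm]
  congr 1
  have hBA00 : (B * A) 0 0 = 0 := by
    simpa [hA, hB, mul_apply, dotProduct, mul_comm] using h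
  have hBA01 : (B * A) 0 1 = a ⬝ᵥ (N *ᵥ a) := by
    simp [hA, hB, mul_apply, dotProduct]
  have hBA10 : (B * A) 1 0 = z ⬝ᵥ (N *ᵥ z) := by
    have : (B * A) 1 0 = z ⬝ᵥ (N *ᵥ z) + c * (a ⬝ᵥ (N *ᵥ z)) := by
      simp [hA, hB, mul_apply, dotProduct, Finset.sum_add_distrib, Finset.mul_sum, add_mul,
        mul_assoc]
    rw [this, h, mul_zero, add_zero]
  have hBA11 : (B * A) 1 1 = c * (a ⬝ᵥ (N *ᵥ a)) := by
    have : (B * A) 1 1 = z ⬝ᵥ (N *ᵥ a) + c * (a ⬝ᵥ (N *ᵥ a)) := by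
      simp [hA, hB, mul_apply, dotProduct, Finset.sum_add_distrib, Finset.mul_sum, add_mul,
        mul_assoc]
    rw [this, h2, zero_add]
  rw [det_fin_two]
  simp only [Matrix.add_apply, hBA00, hBA01, hBA10, hBA11, one_apply_eq,
    one_apply_ne (by decide : (0 : Fin 2) ≠ 1), one_apply_ne (by decide : (1 : Fin 2) ≠ 0)]
  ring
end

section
/- Let d = m + k with m, k ≥ 1, let n ≥ 2, fix rows x₂, …, x_n ∈ ℝ^d and b ∈ ℝ^k. For y ∈ ℝ^m, let X(y) be the n×d matrix whose first row is (y, b) (missing part y, observed part b) and whose remaining rows are x₂, …, x_n, with sample mean μ(y) and sample covariance Σ(y); assume Σ(y) is invertible for every y ∈ ℝ^m. Then (i) the function y ↦ det Σ(y) is a polynomial function of degree at most 2 in the entries of y; and (ii) any y* ∈ ℝ^m satisfying the fixed-point equation y* = μ(y*)_miss + Σ(y*)_mo (Σ(y*)_oo)⁻¹ (b − μ(y*)_obs) is a global minimizer of y ↦ det Σ(y). -/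
open Matrix Polynomial Filter Topology


lemma aux_det_add_vecMulVec_of_isUnit {d : Type*} [Fintype d] [DecidableEq d]
    (B : Matrix d d ℝ) (hB : IsUnit B.det) (u v : d → ℝ) :
    (B + vecMulVec u v).det = B.det + v ⬝ᵥ (B.adjugate *ᵥ u) := by
  rw [Matrix.vecMulVec_eq (ι := Unit), Matrix.det_add_replicateCol_mul_replicateRow hB]
  have hadj : B.det • B⁻¹ = B.adjugate := by
    rw [Matrix.inv_def, smul_smul, Ring.mul_inverse_cancel _ hB, one_smul]
  have h1 : (1 + replicateRow Unit v * B⁻¹ * replicateCol Unit u).det = 1 + v ⬝ᵥ (B⁻¹ *ᵥ u) := by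
    rw [det_unique]
    simp [Matrix.add_apply, Matrix.mul_apply, Matrix.one_apply, dotProduct, mulVec,
      Finset.mul_sum, Finset.sum_mul]
    rw [Finset.sum_comm]
    congr 1; ext i; congr 1; ext j; ring
  rw [h1, ← hadj]
  simp only [Matrix.smul_mulVec, dotProduct_smul, smul_eq_mul]
  ring

/-- Matrix determinant lemma, general real case. -/
lemma aux_det_add_vecMulVec {d : Type*} [Fintype d] [DecidableEq d]
    (A : Matrix d d ℝ) (u v : d → ℝ) :
    (A + vecMulVec u v).det = A.det + v ⬝ᵥ (A.adjugate *ᵥ u) := by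
  -- evaluation of charpoly of -A
  have hev : ∀ ε : ℝ, ((-A).charpoly).eval ε = (A + ε • 1).det := by
    intro ε
    have h1 : ((-A).charpoly).eval ε = (Polynomial.evalRingHom ε) ((charmatrix (-A)).det) := rfl
    rw [h1, RingHom.map_det]
    congr 1
    ext i j
    by_cases hij : i = j
    · subst hij
      simp [charmatrix_apply_eq, Matrix.add_apply, Matrix.one_apply, Matrix.smul_apply]
      ring
    · simp [charmatrix_apply_ne _ _ _ hij, Matrix.add_apply, Matrix.one_apply_ne hij,
        Matrix.smul_apply, hij]
  have hne : (-A).charpoly ≠ 0 := (Matrix.charpoly_monic _).ne_zero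
  have hF : {ε : ℝ | ((-A).charpoly).IsRoot ε}.Finite := Polynomial.finite_setOf_isRoot hne
  -- eventually invertible
  have hevent : ∀ᶠ ε in 𝓝[≠] (0:ℝ), IsUnit (A + ε • 1).det := by
    have h1 : ∀ᶠ ε in 𝓝 (0:ℝ), ε ∉ ({ε : ℝ | ((-A).charpoly).IsRoot ε} \ {0}) := by
      have hcl : IsClosed ({ε : ℝ | ((-A).charpoly).IsRoot ε} \ {0}) := (hF.diff).isClosed
      have h0 : (0:ℝ) ∉ ({ε : ℝ | ((-A).charpoly).IsRoot ε} \ {0}) := fun h => h.2 rfl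
      exact hcl.isOpen_compl.mem_nhds h0
    have h2 : ∀ᶠ ε in 𝓝[≠] (0:ℝ), ε ∉ ({ε : ℝ | ((-A).charpoly).IsRoot ε} \ {0}) :=
      eventually_nhdsWithin_of_eventually_nhds h1
    filter_upwards [h2, eventually_mem_nhdsWithin] with ε h1' h2'
    have : ¬ ((-A).charpoly).IsRoot ε := fun hr => h1' ⟨hr, h2'⟩
    rw [isUnit_iff_ne_zero, ← hev]
    exact fun h => this h
  -- continuity
  have hc1 : Continuous (fun ε : ℝ => (A + ε • (1:Matrix d d ℝ) + vecMulVec u v).det) := by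
    apply Continuous.matrix_det
    exact (continuous_const.add (continuous_id.smul continuous_const)).add continuous_const
  have hc2 : Continuous (fun ε : ℝ => (A + ε • (1:Matrix d d ℝ)).det
      + v ⬝ᵥ ((A + ε • (1:Matrix d d ℝ)).adjugate *ᵥ u)) := by
    have hcA : Continuous (fun ε : ℝ => A + ε • (1:Matrix d d ℝ)) :=
      continuous_const.add (continuous_id.smul continuous_const)
    exact (hcA.matrix_det).add ((continuous_const.dotProduct
      (hcA.matrix_adjugate.matrix_mulVec continuous_const)))
  have ht1 : Tendsto (fun ε : ℝ => (A + ε • (1:Matrix d d ℝ) + vecMulVec u v).det) (𝓝[≠] 0)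
      (𝓝 ((A + vecMulVec u v).det)) := by
    have := hc1.tendsto 0
    simpa using this.mono_left nhdsWithin_le_nhds
  have ht2 : Tendsto (fun ε : ℝ => (A + ε • (1:Matrix d d ℝ) + vecMulVec u v).det) (𝓝[≠] 0)
      (𝓝 (A.det + v ⬝ᵥ (A.adjugate *ᵥ u))) := by
    have base : Tendsto (fun ε : ℝ => (A + ε • (1:Matrix d d ℝ)).det
        + v ⬝ᵥ ((A + ε • (1:Matrix d d ℝ)).adjugate *ᵥ u)) (𝓝[≠] 0)
        (𝓝 (A.det + v ⬝ᵥ (A.adjugate *ᵥ u))) := by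
      have := hc2.tendsto 0
      simpa using this.mono_left nhdsWithin_le_nhds
    apply base.congr'
    filter_upwards [hevent] with ε hε
    exact (aux_det_add_vecMulVec_of_isUnit _ hε u v).symm
  exact tendsto_nhds_unique ht1 ht2

lemma aux_det_quad {d : Type*} [Fintype d] [DecidableEq d]
    (A : Matrix d d ℝ) (c : ℝ) (u : d → ℝ) :
    (A + c • vecMulVec u u).det = A.det + c * (u ⬝ᵥ (A.adjugate *ᵥ u)) := by
  have h1 : c • vecMulVec u u = vecMulVec (c • u) u := by
    ext i j; simp [vecMulVec_apply, smul_eq_mul]; ring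
  rw [h1, aux_det_add_vecMulVec]
  congr 1
  rw [mulVec_smul, dotProduct_smul, smul_eq_mul]

lemma aux_key_min {d : Type*} [Fintype d] [DecidableEq d]
    (A : Matrix d d ℝ) (hA : Aᵀ = A) (c : ℝ) (hc : 0 < c) (v δ w : d → ℝ)
    (hS : (A + c • vecMulVec v v).PosDef)
    (hw : (A + c • vecMulVec v v) *ᵥ w = v)
    (hdw : δ ⬝ᵥ w = 0)
    (hall : ∀ t : ℝ, 0 < (A + c • vecMulVec (v + t • δ) (v + t • δ)).det) :
    (A + c • vecMulVec v v).det ≤ (A + c • vecMulVec (v + δ) (v + δ)).det := by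
  set P := A.adjugate with hP
  have hPsym : Pᵀ = P := by rw [hP, adjugate_transpose, hA]
  -- symmetric bilinear form
  have hsd : ∀ a b : d → ℝ, a ⬝ᵥ (P *ᵥ b) = b ⬝ᵥ (P *ᵥ a) := by
    intro a b
    rw [dotProduct_mulVec, ← hPsym, vecMul_transpose, dotProduct_comm, hPsym]
  have hsdA : ∀ a b : d → ℝ, a ⬝ᵥ (A *ᵥ b) = b ⬝ᵥ (A *ᵥ a) := by
    intro a b
    rw [dotProduct_mulVec, ← hA, vecMul_transpose, dotProduct_comm, hA]
  set β := δ ⬝ᵥ (P *ᵥ v) with hβ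
  set α := δ ⬝ᵥ (P *ᵥ δ) with hα
  have hexp : ∀ t : ℝ, (v + t • δ) ⬝ᵥ (P *ᵥ (v + t • δ))
      = v ⬝ᵥ (P *ᵥ v) + 2 * β * t + α * t ^ 2 := by
    intro t
    have h1 := hsd v δ
    simp only [mulVec_add, mulVec_smul, dotProduct_add, add_dotProduct, smul_dotProduct,
      dotProduct_smul, smul_eq_mul, hβ, hα]
    rw [h1]
    ring
  -- vecMulVec mulVec
  have hvmv : ∀ (a b x : d → ℝ), vecMulVec a b *ᵥ x = (b ⬝ᵥ x) • a := by
    intro a b x; funext i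
    simp [vecMulVec_apply, mulVec, dotProduct, Finset.mul_sum, Finset.sum_mul]
    congr 1; ext j; ring
  have hAw : A *ᵥ w = (1 - c * (v ⬝ᵥ w)) • v := by
    have h1 : (A + c • vecMulVec v v) *ᵥ w = A *ᵥ w + (c * (v ⬝ᵥ w)) • v := by
      rw [add_mulVec, smul_mulVec, hvmv, smul_smul]
    rw [h1] at hw
    rw [sub_smul, one_smul]
    linear_combination (norm := module) hw
  set γ := 1 - c * (v ⬝ᵥ w) with hγdef
  -- kernel property
  have hker : ∀ z : d → ℝ, A *ᵥ z = 0 → v ⬝ᵥ z = 0 → z = 0 := by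
    intro z h1 h2
    by_contra hz
    have h3 := hS.dotProduct_mulVec_pos hz
    have h4 : (A + c • vecMulVec v v) *ᵥ z = 0 := by
      rw [add_mulVec, smul_mulVec, hvmv, h1, h2, zero_smul, smul_zero, add_zero]
    rw [h4] at h3
    simp at h3
  have hAz : A *ᵥ (P *ᵥ v) = A.det • v := by
    rw [mulVec_mulVec, mul_adjugate, smul_mulVec, one_mulVec]
  have hβ0 : β = 0 := by
    by_cases hγ : γ = 0
    · -- γ = 0 : c * (v ⬝ᵥ w) = 1, A *ᵥ w = 0
      have hvw1 : c * (v ⬝ᵥ w) = 1 := by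
        have h := hγ; rw [hγdef] at h; linarith
      have hAw0 : A *ᵥ w = 0 := by rw [hAw, hγ, zero_smul]
      have hvz₀ : v ⬝ᵥ (P *ᵥ v - (c * (v ⬝ᵥ (P *ᵥ v))) • w) = 0 := by
        rw [dotProduct_sub, dotProduct_smul, smul_eq_mul]
        linear_combination (-(v ⬝ᵥ (P *ᵥ v))) * hvw1
      have hAz₀ : A *ᵥ (P *ᵥ v - (c * (v ⬝ᵥ (P *ᵥ v))) • w) = A.det • v := by
        rw [mulVec_sub, hAz, mulVec_smul, hAw0, smul_zero, sub_zero]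
      have hdet0 : A.det = 0 := by
        have h1 : w ⬝ᵥ (A *ᵥ (P *ᵥ v - (c * (v ⬝ᵥ (P *ᵥ v))) • w)) = A.det * (w ⬝ᵥ v) := by
          rw [hAz₀, dotProduct_smul, smul_eq_mul]
        have h2 : w ⬝ᵥ (A *ᵥ (P *ᵥ v - (c * (v ⬝ᵥ (P *ᵥ v))) • w)) = 0 := by
          rw [hsdA w _, hAw0, dotProduct_zero]
        have hwv : w ⬝ᵥ v ≠ 0 := by
          rw [dotProduct_comm]
          intro h; rw [h, mul_zero] at hvw1; exact zero_ne_one hvw1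
        exact (mul_eq_zero.mp (h1.symm.trans h2)).resolve_right hwv
      have hz00 : P *ᵥ v - (c * (v ⬝ᵥ (P *ᵥ v))) • w = 0 :=
        hker _ (by rw [hAz₀, hdet0, zero_smul]) hvz₀
      have hPv : P *ᵥ v = (c * (v ⬝ᵥ (P *ᵥ v))) • w := sub_eq_zero.mp hz00
      rw [hβ, hPv, dotProduct_smul, smul_eq_mul, hdw, mul_zero]
    · -- γ ≠ 0 : v = γ⁻¹ • (A *ᵥ w)
      have hv : v = γ⁻¹ • (A *ᵥ w) := by
        rw [hAw, smul_smul, inv_mul_cancel₀ hγ, one_smul]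
      have hPv : P *ᵥ v = (γ⁻¹ * A.det) • w := by
        rw [hv, mulVec_smul, mulVec_mulVec, adjugate_mul, smul_mulVec, one_mulVec,
          smul_smul]
      rw [hβ, hPv, dotProduct_smul, smul_eq_mul, hdw, mul_zero]
  -- the determinant identity
  have hq : ∀ t : ℝ, (A + c • vecMulVec (v + t • δ) (v + t • δ)).det
      = (A.det + c * (v ⬝ᵥ (P *ᵥ v))) + c * α * t ^ 2 := by
    intro t
    rw [aux_det_quad, hexp t, hβ0]
    ring
  have hQpos : 0 < A.det + c * (v ⬝ᵥ (P *ᵥ v)) := by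
    have := hall 0
    rw [hq 0] at this
    simpa using this
  have hα0 : 0 ≤ α := by
    by_contra hneg
    push_neg at hneg
    set Q := A.det + c * (v ⬝ᵥ (P *ᵥ v)) with hQ
    have hca : c * α < 0 := mul_neg_of_pos_of_neg hc hneg
    have harg : 0 ≤ Q / (-(c * α)) := div_nonneg hQpos.le (by linarith)
    set t := Real.sqrt (Q / (-(c * α))) with ht
    have ht2 : t ^ 2 = Q / (-(c * α)) := Real.sq_sqrt harg
    have := hall t
    rw [hq t, ht2] at this
    have : (0:ℝ) < Q + c * α * (Q / (-(c * α))) := this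
    have heq : c * α * (Q / (-(c * α))) = -Q := by
      have hne : -(c * α) ≠ 0 := by linarith
      have h2 : Q / (-(c * α)) * (-(c * α)) = Q := div_mul_cancel₀ Q hne
      linear_combination -h2
    rw [heq] at this
    linarith
  have h1 := hq 1
  have h0 := hq 0
  simp only [one_smul, zero_smul, add_zero] at h1 h0
  rw [h1, h0]
  nlinarith [mul_nonneg hc.le hα0]

lemma aux_psd_smul {d : Type*} [Fintype d] (c : ℝ) (hc : 0 ≤ c)
    (M : Matrix d d ℝ) (hM : M.PosSemidef) : (c • M).PosSemidef := by
  refine PosSemidef.of_dotProduct_mulVec_nonneg ?_ ?_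
  · show (c • M)ᴴ = c • M
    rw [conjTranspose_smul, hM.1, star_trivial]
  · intro z
    rw [smul_mulVec, dotProduct_smul, smul_eq_mul]
    exact mul_nonneg hc (hM.dotProduct_mulVec_nonneg z)


/-- With the first row's missing part `y` varying, (i) `y ↦ det Σ(y)` is a
polynomial of degree at most 2 in the entries of `y`, and (ii) any fixed point of the
conditional-mean imputation equation is a global minimizer of `y ↦ det Σ(y)`. -/
theorem det_cov_polynomial_and_fixed_point_min
    (m k n : ℕ) (hm : 1 ≤ m) (hk : 1 ≤ k) (hn : 2 ≤ n)
    (x : Fin n → (Fin m ⊕ Fin k → ℝ)) (b : Fin k → ℝ) :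
    let row : (Fin m → ℝ) → Fin n → (Fin m ⊕ Fin k → ℝ) :=
      fun y i => if i = ⟨0, by omega⟩ then Sum.elim y b else x i
    let mean : (Fin m → ℝ) → (Fin m ⊕ Fin k → ℝ) := fun y => (n : ℝ)⁻¹ • ∑ i, row y i
    let cov : (Fin m → ℝ) → Matrix (Fin m ⊕ Fin k) (Fin m ⊕ Fin k) ℝ :=
      fun y => ((n : ℝ) - 1)⁻¹ • ∑ i, vecMulVec (row y i - mean y) (row y i - mean y)
    ∀ _hinv : ∀ y : Fin m → ℝ, IsUnit (cov y).det,
    (∃ p : MvPolynomial (Fin m) ℝ, p.totalDegree ≤ 2 ∧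
        ∀ y : Fin m → ℝ, (cov y).det = MvPolynomial.eval y p) ∧
    (∀ ystar : Fin m → ℝ,
      (∀ i : Fin m, ystar i = mean ystar (Sum.inl i) +
        ((cov ystar).toBlocks₁₂ *ᵥ (((cov ystar).toBlocks₂₂)⁻¹ *ᵥ
          (b - fun j => mean ystar (Sum.inr j)))) i) →
      ∀ y : Fin m → ℝ, (cov ystar).det ≤ (cov y).det) := by
  intro row mean cov hinv
  have hn2 : (2:ℝ) ≤ (n:ℝ) := by exact_mod_cast hn
  have hn0 : (n:ℝ) ≠ 0 := by linarith
  have hn1 : (n:ℝ) - 1 ≠ 0 := by linarith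
  have hcpos : (0:ℝ) < (n:ℝ)⁻¹ := by positivity
  set e0 : Fin n := ⟨0, by omega⟩ with he0
  set E : Finset (Fin n) := Finset.univ.erase e0 with hE
  have hrow0 : ∀ y : Fin m → ℝ, row y e0 = Sum.elim y b := by
    intro y; show (if e0 = e0 then Sum.elim y b else x e0) = _; rw [if_pos rfl]
  have hrowl : ∀ (y : Fin m → ℝ) (l : Fin n), l ∈ E → row y l = x l := by
    intro y l hl
    show (if l = e0 then Sum.elim y b else x l) = _
    rw [if_neg (Finset.ne_of_mem_erase hl)]
  have hmean : ∀ (y : Fin m → ℝ) (i : Fin m ⊕ Fin k),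
      mean y i = (n:ℝ)⁻¹ * (Sum.elim y b i + ∑ l ∈ E, x l i) := by
    intro y i
    show ((n:ℝ)⁻¹ • ∑ l, row y l) i = _
    rw [Pi.smul_apply, smul_eq_mul]
    congr 1
    rw [Finset.sum_apply, ← Finset.add_sum_erase _ _ (Finset.mem_univ e0), hrow0 y]
    congr 1
    exact Finset.sum_congr hE.symm fun l hl => by rw [hrowl y l hl]
  have hcard : (E.card : ℝ) = (n:ℝ) - 1 := by
    rw [hE, Finset.card_erase_of_mem (Finset.mem_univ e0), Finset.card_univ, Fintype.card_fin,
      Nat.cast_sub (by omega : 1 ≤ n), Nat.cast_one]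
  have hexpand : ∀ (f g : Fin n → ℝ) (p q : ℝ),
      ∑ l ∈ E, (f l - p) * (g l - q) =
      (∑ l ∈ E, f l * g l) - q * (∑ l ∈ E, f l) - p * (∑ l ∈ E, g l)
        + ((n:ℝ)-1) * (p * q) := by
    intro f g p q
    rw [Finset.sum_congr rfl fun l _ =>
      (by ring : (f l - p) * (g l - q) = f l * g l - q * f l - p * g l + p * q)]
    rw [Finset.sum_add_distrib, Finset.sum_sub_distrib, Finset.sum_sub_distrib,
      ← Finset.mul_sum, ← Finset.mul_sum, Finset.sum_const, nsmul_eq_mul, hcard]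
  -- the constants
  set av : Fin m ⊕ Fin k → ℝ := fun i => ((n:ℝ)-1)⁻¹ * ∑ l ∈ E, x l i with hav
  set A : Matrix (Fin m ⊕ Fin k) (Fin m ⊕ Fin k) ℝ :=
    ((n:ℝ)-1)⁻¹ • ∑ l ∈ E, vecMulVec (fun i => x l i - av i) (fun i => x l i - av i) with hA
  set vf : (Fin m → ℝ) → (Fin m ⊕ Fin k → ℝ) :=
    fun y i => Sum.elim y b i - av i with hvf
  have hcov : ∀ y : Fin m → ℝ, cov y = A + (n:ℝ)⁻¹ • vecMulVec (vf y) (vf y) := by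
    intro y
    show ((n:ℝ)-1)⁻¹ • ∑ l, vecMulVec (row y l - mean y) (row y l - mean y) = _
    ext i j
    have hAij : A i j = ((n:ℝ)-1)⁻¹ * ((∑ l ∈ E, x l i * x l j)
        - av j * (∑ l ∈ E, x l i) - av i * (∑ l ∈ E, x l j)
        + ((n:ℝ)-1) * (av i * av j)) := by
      rw [hA]
      simp only [Matrix.smul_apply, Matrix.sum_apply, vecMulVec_apply, smul_eq_mul]
      rw [hexpand]
    simp only [Matrix.add_apply, Matrix.smul_apply, Matrix.sum_apply, vecMulVec_apply,
      Pi.sub_apply, smul_eq_mul, hvf]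
    rw [← Finset.add_sum_erase _ _ (Finset.mem_univ e0), ← hE, hrow0 y]
    rw [Finset.sum_congr rfl fun l hl => (by rw [hrowl y l hl] :
        (row y l i - mean y i) * (row y l j - mean y j)
          = (x l i - mean y i) * (x l j - mean y j))]
    rw [hexpand, hAij, hmean y i, hmean y j]
    simp only [hav]
    field_simp
    ring
  -- symmetry of A
  have hAsym : Aᵀ = A := by
    rw [hA]
    ext i j
    simp only [Matrix.transpose_apply, Matrix.smul_apply, Matrix.sum_apply, vecMulVec_apply,
      smul_eq_mul]
    congr 1
    exact Finset.sum_congr rfl fun l _ => by ring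
  -- positive semidefiniteness of cov y
  have hPSD : ∀ y : Fin m → ℝ, (cov y).PosSemidef := by
    intro y
    have hDD : ∑ l, vecMulVec (row y l - mean y) (row y l - mean y)
        = (Matrix.of fun l i => row y l i - mean y i)ᴴ
          * (Matrix.of fun l i => row y l i - mean y i) := by
      ext i j
      simp [Matrix.mul_apply, Matrix.conjTranspose_apply, vecMulVec_apply, Matrix.sum_apply,
        Matrix.of_apply]
    have h1 : (∑ l, vecMulVec (row y l - mean y) (row y l - mean y)).PosSemidef := by
      rw [hDD]; exact posSemidef_conjTranspose_mul_self _
    have h2 : (((n:ℝ)-1)⁻¹ •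
        ∑ l, vecMulVec (row y l - mean y) (row y l - mean y)).PosSemidef :=
      aux_psd_smul _ (by rw [inv_nonneg]; linarith) _ h1
    exact h2
  have hPD : ∀ y : Fin m → ℝ, (cov y).PosDef := by
    intro y
    refine PosDef.of_dotProduct_mulVec_pos (hPSD y).1 fun z hz => ?_
    rcases lt_or_eq_of_le ((hPSD y).dotProduct_mulVec_nonneg z) with h | h
    · exact h
    · exfalso
      have hzero : (cov y) *ᵥ z = 0 := ((hPSD y).dotProduct_mulVec_zero_iff z).mp h.symm
      have hdet : (cov y).det = 0 := (Matrix.exists_mulVec_eq_zero_iff).mp ⟨z, hz, hzero⟩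
      exact (isUnit_iff_ne_zero.mp (hinv y)) hdet
  have hdetpos : ∀ y : Fin m → ℝ, 0 < (cov y).det := fun y => (hPD y).det_pos
  constructor
  · -- Part (i): polynomial of degree ≤ 2
    have hdq : ∀ u : Fin m ⊕ Fin k → ℝ,
        (A + (n:ℝ)⁻¹ • vecMulVec u u).det
          = A.det + (n:ℝ)⁻¹ * (u ⬝ᵥ (A.adjugate *ᵥ u)) := fun u => aux_det_quad A _ u
    classical
    set Vp : Fin m ⊕ Fin k → MvPolynomial (Fin m) ℝ :=
      Sum.elim (fun i => MvPolynomial.X i - MvPolynomial.C (av (Sum.inl i)))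
        (fun j => MvPolynomial.C (b j - av (Sum.inr j))) with hVp
    refine ⟨MvPolynomial.C A.det + MvPolynomial.C ((n:ℝ)⁻¹) *
        ∑ i, ∑ j, Vp i * (MvPolynomial.C (A.adjugate i j) * Vp j), ?_, ?_⟩
    · -- degree bound
      have hV1 : ∀ i, (Vp i).totalDegree ≤ 1 := by
        intro i
        cases i with
        | inl i =>
          simp only [hVp, Sum.elim_inl, sub_eq_add_neg, ← MvPolynomial.C_neg]
          refine le_trans (MvPolynomial.totalDegree_add _ _) ?_
          simp [MvPolynomial.totalDegree_X, MvPolynomial.totalDegree_C]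
        | inr j =>
          simp only [hVp, Sum.elim_inr]
          rw [MvPolynomial.totalDegree_C]
          omega
      refine le_trans (MvPolynomial.totalDegree_add _ _) ?_
      rw [max_le_iff]
      constructor
      · simp [MvPolynomial.totalDegree_C]
      · refine le_trans (MvPolynomial.totalDegree_mul _ _) ?_
        rw [MvPolynomial.totalDegree_C, zero_add]
        refine le_trans (MvPolynomial.totalDegree_finset_sum _ _) ?_
        refine Finset.sup_le fun i _ => ?_
        refine le_trans (MvPolynomial.totalDegree_finset_sum _ _) ?_
        refine Finset.sup_le fun j _ => ?_
        refine le_trans (MvPolynomial.totalDegree_mul _ _) ?_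
        have h2 : (MvPolynomial.C (A.adjugate i j) * Vp j).totalDegree ≤ 1 := by
          refine le_trans (MvPolynomial.totalDegree_mul _ _) ?_
          rw [MvPolynomial.totalDegree_C, zero_add]
          exact hV1 j
        have h1 := hV1 i
        omega
    · intro y
      rw [hcov y, hdq (vf y)]
      have hev : ∀ i, MvPolynomial.eval y (Vp i) = vf y i := by
        intro i
        cases i with
        | inl i => simp [hVp, hvf]
        | inr j => simp [hVp, hvf]
      have hd : vf y ⬝ᵥ (A.adjugate *ᵥ vf y)
          = ∑ i, ∑ j, vf y i * (A.adjugate i j * vf y j) := by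
        simp only [dotProduct, mulVec]
        exact Finset.sum_congr rfl fun i _ => by rw [Finset.mul_sum]
      simp only [map_add, _root_.map_mul, MvPolynomial.eval_C, map_sum, hev]
      rw [hd]
  -- Part (ii)
  · intro ystar hfix y
    -- the block 22 is positive definite
    have hS22 : ((cov ystar).toBlocks₂₂).PosDef := by
      refine PosDef.of_dotProduct_mulVec_pos ?_ ?_
      · ext i j
        have h := (hPD ystar).1
        have := congrFun (congrFun h (Sum.inr i)) (Sum.inr j)
        simpa [Matrix.conjTranspose_apply, Matrix.toBlocks₂₂] using this
      · intro z hz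
        have hz' : (Sum.elim 0 z : Fin m ⊕ Fin k → ℝ) ≠ 0 := by
          intro h0
          apply hz
          funext j
          simpa using congrFun h0 (Sum.inr j)
        have h2 := (hPD ystar).dotProduct_mulVec_pos hz'
        have key : star (Sum.elim (0 : Fin m → ℝ) z) ⬝ᵥ ((cov ystar) *ᵥ Sum.elim 0 z)
            = star z ⬝ᵥ ((cov ystar).toBlocks₂₂ *ᵥ z) := by
          simp [dotProduct, mulVec, Fintype.sum_sum_type, Matrix.toBlocks₂₂]
        rw [key] at h2
        exact h2
    have hdet22 : IsUnit ((cov ystar).toBlocks₂₂).det := hS22.det_pos.ne'.isUnit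
    set κ : ℝ := (n:ℝ)/((n:ℝ)-1) with hκdef
    have hκ : ∀ (y' : Fin m → ℝ) (i : Fin m ⊕ Fin k),
        vf y' i = κ * (Sum.elim y' b i - mean y' i) := by
      intro y' i
      show Sum.elim y' b i - av i = _
      rw [hmean y' i]
      simp only [hav, hκdef]
      field_simp
      ring
    have hfix' : ∀ i : Fin m, ystar i - mean ystar (Sum.inl i)
        = ((cov ystar).toBlocks₁₂ *ᵥ (((cov ystar).toBlocks₂₂)⁻¹ *ᵥ
            (b - fun j => mean ystar (Sum.inr j)))) i := by
      intro i
      have := hfix i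
      linarith
    set w2 : Fin k → ℝ := κ • (((cov ystar).toBlocks₂₂)⁻¹ *ᵥ
        (b - fun j => mean ystar (Sum.inr j))) with hw2
    set wv : Fin m ⊕ Fin k → ℝ := Sum.elim 0 w2 with hwv
    set δ : Fin m ⊕ Fin k → ℝ := Sum.elim (y - ystar) (0 : Fin k → ℝ) with hδ
    have hw : (cov ystar) *ᵥ wv = vf ystar := by
      funext i
      cases i with
      | inl i =>
        have hL : ((cov ystar) *ᵥ wv) (Sum.inl i) = ((cov ystar).toBlocks₁₂ *ᵥ w2) i := by
          simp [mulVec, dotProduct, Fintype.sum_sum_type, Matrix.toBlocks₁₂, hwv]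
        rw [hL, hw2, mulVec_smul]
        have h1 : (((cov ystar).toBlocks₁₂ *ᵥ (((cov ystar).toBlocks₂₂)⁻¹ *ᵥ
            (b - fun j => mean ystar (Sum.inr j))))) i = ystar i - mean ystar (Sum.inl i) :=
          (hfix' i).symm
        rw [Pi.smul_apply, h1, smul_eq_mul, hκ ystar (Sum.inl i)]
        rfl
      | inr j =>
        have hL : ((cov ystar) *ᵥ wv) (Sum.inr j) = ((cov ystar).toBlocks₂₂ *ᵥ w2) j := by
          simp [mulVec, dotProduct, Fintype.sum_sum_type, Matrix.toBlocks₂₂, hwv]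
        rw [hL, hw2, mulVec_smul, mulVec_mulVec, Matrix.mul_nonsing_inv _ hdet22, one_mulVec]
        rw [Pi.smul_apply, smul_eq_mul, hκ ystar (Sum.inr j)]
        simp
    have hδw : δ ⬝ᵥ wv = 0 := by
      simp [dotProduct, Fintype.sum_sum_type, hδ, hwv]
    have hveq : ∀ t : ℝ, vf (fun i => ystar i + t * (y i - ystar i)) = vf ystar + t • δ := by
      intro t
      funext i
      have hl : ∀ (z : Fin m → ℝ) (i : Fin m ⊕ Fin k), vf z i = Sum.elim z b i - av i :=
        fun z i => rfl
      cases i with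
      | inl i =>
        simp only [Pi.add_apply, Pi.smul_apply, hl, Sum.elim_inl, hδ, Pi.sub_apply,
          smul_eq_mul]
        ring
      | inr j =>
        simp only [Pi.add_apply, Pi.smul_apply, hl, Sum.elim_inr, hδ, Pi.zero_apply,
          smul_eq_mul]
        ring
    have hall : ∀ t : ℝ, 0 < (A + (n:ℝ)⁻¹ • vecMulVec (vf ystar + t • δ)
        (vf ystar + t • δ)).det := by
      intro t
      have h := hdetpos (fun i => ystar i + t * (y i - ystar i))
      rwa [hcov _, hveq t] at h
    have hSpd : (A + (n:ℝ)⁻¹ • vecMulVec (vf ystar) (vf ystar)).PosDef := by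
      rw [← hcov ystar]; exact hPD ystar
    have hmain := aux_key_min A hAsym _ hcpos (vf ystar) δ wv hSpd
      (by rw [← hcov ystar]; exact hw) hδw hall
    have hy : vf y = vf ystar + δ := by
      have h := hveq 1
      simp only [one_mul, one_smul] at h
      rw [← h]
      congr 1
      funext i
      ring
    calc (cov ystar).det = (A + (n:ℝ)⁻¹ • vecMulVec (vf ystar) (vf ystar)).det := by
            rw [hcov ystar]
      _ ≤ (A + (n:ℝ)⁻¹ • vecMulVec (vf ystar + δ) (vf ystar + δ)).det := hmain
      _ = (cov y).det := by rw [hcov y, hy]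
end

section
/- Let Y be an n×d real matrix (n ≥ 2) with sample mean μ and sample covariance Σ, and assume Σ is invertible. Let M ⊆ {1,…,n}×{1,…,d} be a set of ('missing') entry positions, and for each row i let miss(i) = {j : (i,j) ∈ M} and obs(i) its complement in {1,…,d}. Suppose that for every row i with miss(i) ≠ ∅, Y_{i,miss(i)} = μ_{miss(i)} + Σ_{miss(i),obs(i)} (Σ_{obs(i),obs(i)})⁻¹ (Y_{i,obs(i)} − μ_{obs(i)}) (each incomplete row is imputed by the conditional mean given its observed coordinates, with moments of Y). Then Y is a stationary point of the covariance determinant with respect to the missing entries: for every (i,j) ∈ M, the real function t ↦ det Σ(Y with entry (i,j) replaced by t) has derivative 0 at t = Y_{i,j}. -/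
open Matrix Finset

noncomputable def meanD (n d : ℕ) (X : Matrix (Fin n) (Fin d) ℝ) : Fin d → ℝ :=
  (n : ℝ)⁻¹ • ∑ i, X i

noncomputable def covD (n d : ℕ) (X : Matrix (Fin n) (Fin d) ℝ) : Matrix (Fin d) (Fin d) ℝ :=
  ((n : ℝ) - 1)⁻¹ • ∑ i, vecMulVec (X i - meanD n d X) (X i - meanD n d X)

noncomputable def detCML (d : ℕ) : ContinuousMultilinearMap ℝ (fun _ : Fin d => (Fin d → ℝ)) ℝ where
  toMultilinearMap := (Matrix.detRowAlternating (R := ℝ) (n := Fin d)).toMultilinearMap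
  cont := by
    show Continuous fun M : Matrix (Fin d) (Fin d) ℝ => M.det
    exact continuous_id.matrix_det

lemma detCML_apply (d : ℕ) (A : Matrix (Fin d) (Fin d) ℝ) : detCML d A = A.det := rfl

private lemma sum_split {d : ℕ} (p : Fin d → Prop) [DecidablePred p] (f : Fin d → ℝ) :
    ∑ x, f x = (∑ a : {x // p x}, f a.1) + ∑ b : {x // ¬ p x}, f b.1 :=
  (Fintype.sum_subtype_add_sum_subtype p f).symm

private lemma key_vanish {d : ℕ} (S : Matrix (Fin d) (Fin d) ℝ)
    (hPSD : S.PosSemidef) (hdet : IsUnit S.det)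
    (p : Fin d → Prop) [DecidablePred p] (w : Fin d → ℝ)
    (himp : ∀ jA : {x // p x}, w jA.1 =
      ((S.submatrix (fun a : {x // p x} => a.1) (fun b : {x // ¬ p x} => b.1)) *ᵥ
        ((S.submatrix (fun b : {x // ¬ p x} => b.1) (fun b : {x // ¬ p x} => b.1))⁻¹ *ᵥ
          fun l : {x // ¬ p x} => w l.1)) jA) :
    ∀ jA : {x // p x}, (S⁻¹ *ᵥ w) jA.1 = 0 := by
  classical
  set u : Fin d → ℝ := S⁻¹ *ᵥ w with hu_def
  have hker : ∀ v : Fin d → ℝ, S *ᵥ v = 0 → v = 0 := by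
    intro v hv
    have h := congrArg (fun t => S⁻¹ *ᵥ t) hv
    simpa [Matrix.mulVec_mulVec, Matrix.nonsing_inv_mul _ hdet] using h
  have hSu : S *ᵥ u = w := by
    rw [hu_def, Matrix.mulVec_mulVec, Matrix.mul_nonsing_inv _ hdet, Matrix.one_mulVec]
  set SBB := S.submatrix (fun b : {x // ¬ p x} => b.1) (fun b : {x // ¬ p x} => b.1) with hSBBd
  set SAB := S.submatrix (fun a : {x // p x} => a.1) (fun b : {x // ¬ p x} => b.1) with hSABd
  set SBA := S.submatrix (fun b : {x // ¬ p x} => b.1) (fun a : {x // p x} => a.1) with hSBAd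
  -- SBB is invertible
  have hSBBdet : IsUnit SBB.det := by
    rw [isUnit_iff_ne_zero]
    intro h0
    obtain ⟨v, hvne, hv⟩ := Matrix.exists_mulVec_eq_zero_iff.2 h0
    set v' : Fin d → ℝ := fun l => if h : p l then 0 else v ⟨l, h⟩ with hv'd
    have hmv : ∀ l : Fin d, (S *ᵥ v') l = ∑ b : {x // ¬ p x}, S l b.1 * v b := by
      intro l
      show ∑ x, S l x * v' x = _
      rw [sum_split p, Finset.sum_eq_zero (fun (a : {x // p x}) _ => by
        simp [hv'd, a.2] : ∀ a : {x // p x}, a ∈ Finset.univ → S l a.1 * v' a.1 = 0), zero_add]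
      exact Finset.sum_congr rfl fun b _ => by simp [hv'd, b.2]
    have hquad : star v' ⬝ᵥ (S *ᵥ v') = 0 := by
      have : star v' ⬝ᵥ (S *ᵥ v') = ∑ x, v' x * (S *ᵥ v') x := by
        simp [dotProduct]
      rw [this, sum_split p]
      have hA0 : ∑ a : {x // p x}, v' a.1 * (S *ᵥ v') a.1 = 0 := by
        apply Finset.sum_eq_zero; intro a _; simp [hv'd, a.2]
      have hB0 : ∑ b : {x // ¬ p x}, v' b.1 * (S *ᵥ v') b.1
          = ∑ b : {x // ¬ p x}, v b * (SBB *ᵥ v) b := by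
        refine Finset.sum_congr rfl fun b _ => ?_
        rw [hmv]
        have h1 : v' b.1 = v b := by simp [hv'd, b.2]
        have h2 : (SBB *ᵥ v) b = ∑ b2 : {x // ¬ p x}, S b.1 b2.1 * v b2 := by
          simp [hSBBd, Matrix.mulVec, dotProduct, Matrix.submatrix_apply]
        rw [h1, h2]
      rw [hA0, hB0, hv]
      simp
    have hv'0 : v' = 0 := hker _ ((hPSD.dotProduct_mulVec_zero_iff v').1 hquad)
    apply hvne
    funext b
    have := congrFun hv'0 b.1
    simpa [hv'd, b.2] using this
  -- main computation
  set a : {x // p x} → ℝ := fun jA => u jA.1 with had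
  set bv : {x // ¬ p x} → ℝ := fun lB => u lB.1 with hbvd
  set c : {x // ¬ p x} → ℝ := SBB⁻¹ *ᵥ (SBA *ᵥ a) with hcd
  have hEq : ∀ l, (∑ m : {x // p x}, S l m.1 * u m.1)
      + (∑ m : {x // ¬ p x}, S l m.1 * u m.1) = w l := by
    intro l
    have h := congrFun hSu l
    rwa [show (S *ᵥ u) l = ∑ x, S l x * u x from rfl, sum_split p] at h
  have hwB : (fun lB : {x // ¬ p x} => w lB.1) = SBA *ᵥ a + SBB *ᵥ bv := by
    funext lB
    rw [← hEq lB.1]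
    simp [hSBAd, hSBBd, Matrix.mulVec, dotProduct, Matrix.submatrix_apply, had, hbvd]
  have hcb : SBB⁻¹ *ᵥ (fun lB : {x // ¬ p x} => w lB.1) = c + bv := by
    rw [hwB, Matrix.mulVec_add]
    congr 1
    rw [Matrix.mulVec_mulVec, Matrix.nonsing_inv_mul _ hSBBdet, Matrix.one_mulVec]
  have hAeq : ∀ jA : {x // p x},
      (∑ m : {x // p x}, S jA.1 m.1 * u m.1) = (SAB *ᵥ c) jA := by
    intro jA
    have h1 := hEq jA.1
    have h2 := himp jA
    rw [hcb] at h2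
    have h3 : (SAB *ᵥ (c + bv)) jA
        = (SAB *ᵥ c) jA + (∑ m : {x // ¬ p x}, S jA.1 m.1 * u m.1) := by
      rw [Matrix.mulVec_add]
      show (SAB *ᵥ c) jA + (SAB *ᵥ bv) jA = _
      have hbb : (SAB *ᵥ bv) jA = ∑ m : {x // ¬ p x}, S jA.1 m.1 * u m.1 := by
        simp [hSABd, Matrix.mulVec, dotProduct, Matrix.submatrix_apply, hbvd]
      rw [hbb]
    rw [h3] at h2
    linarith
  set z : Fin d → ℝ := fun l => if h : p l then u l else -(c ⟨l, h⟩) with hzd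
  have hz0 : S *ᵥ z = 0 := by
    funext l
    show ∑ x, S l x * z x = 0
    rw [sum_split p]
    have e1 : ∑ m : {x // p x}, S l m.1 * z m.1 = ∑ m : {x // p x}, S l m.1 * u m.1 :=
      Finset.sum_congr rfl fun m _ => by rw [hzd]; simp [m.2]
    have e2 : ∑ m : {x // ¬ p x}, S l m.1 * z m.1 = -∑ m : {x // ¬ p x}, S l m.1 * c m := by
      rw [← Finset.sum_neg_distrib]
      exact Finset.sum_congr rfl fun m _ => by rw [hzd]; simp [m.2]
    rw [e1, e2]
    have hSABc : ∀ lA : {x // p x}, (SAB *ᵥ c) lA = ∑ m : {x // ¬ p x}, S lA.1 m.1 * c m := by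
      intro lA; simp [hSABd, Matrix.mulVec, dotProduct, Matrix.submatrix_apply]
    by_cases hl : p l
    · have := hAeq ⟨l, hl⟩
      rw [hSABc ⟨l, hl⟩] at this
      rw [show (⟨l, hl⟩ : {x // p x}).1 = l from rfl] at this
      rw [this]; ring
    · have h4 : SBB *ᵥ c = SBA *ᵥ a := by
        rw [hcd, Matrix.mulVec_mulVec, Matrix.mul_nonsing_inv _ hSBBdet, Matrix.one_mulVec]
      have h5 := congrFun h4 ⟨l, hl⟩
      have h6 : (SBB *ᵥ c) (⟨l, hl⟩ : {x // ¬ p x}) = ∑ m : {x // ¬ p x}, S l m.1 * c m := by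
        simp [hSBBd, Matrix.mulVec, dotProduct, Matrix.submatrix_apply]
      have h7 : (SBA *ᵥ a) (⟨l, hl⟩ : {x // ¬ p x}) = ∑ m : {x // p x}, S l m.1 * u m.1 := by
        simp [hSBAd, Matrix.mulVec, dotProduct, Matrix.submatrix_apply, had]
      rw [h6, h7] at h5
      rw [← h5]; ring
  have hzz : z = 0 := hker z hz0
  intro jA
  have := congrFun hzz jA.1
  rw [hzd] at this
  simpa [jA.2] using this


private lemma covD_entry (n d : ℕ) (Z : Matrix (Fin n) (Fin d) ℝ) (k l : Fin d) :
    covD n d Z k l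
      = ((n : ℝ) - 1)⁻¹ * ∑ m, (Z m k - meanD n d Z k) * (Z m l - meanD n d Z l) := by
  simp [covD, Matrix.smul_apply, Matrix.sum_apply, vecMulVec_apply, smul_eq_mul]

private lemma covD_posSemidef (n d : ℕ) (hn : 2 ≤ n) (Y : Matrix (Fin n) (Fin d) ℝ) :
    (covD n d Y).PosSemidef := by
  have hc : (0:ℝ) ≤ ((n:ℝ) - 1)⁻¹ := by
    have : (2:ℝ) ≤ (n:ℝ) := by exact_mod_cast hn
    have : (0:ℝ) ≤ (n:ℝ) - 1 := by linarith
    positivity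
  set W : Matrix (Fin n) (Fin d) ℝ := Matrix.of (fun m l => Y m l - meanD n d Y l) with hW
  have hfact : covD n d Y = ((n:ℝ) - 1)⁻¹ • (Wᴴ * W) := by
    ext k l
    rw [covD_entry]
    simp [hW, Matrix.smul_apply, Matrix.mul_apply, Matrix.conjTranspose_apply, smul_eq_mul]
  rw [hfact]
  have h := Matrix.posSemidef_conjTranspose_mul_self W
  constructor
  · show (((n:ℝ) - 1)⁻¹ • (Wᴴ * W))ᴴ = _
    rw [Matrix.conjTranspose_smul, h.1]
    norm_num
  · intro x
    exact (h.smul hc).2 x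

private lemma covD_symm (n d : ℕ) (hn : 2 ≤ n) (Y : Matrix (Fin n) (Fin d) ℝ) :
    (covD n d Y)ᵀ = covD n d Y := by
  have h := (covD_posSemidef n d hn Y).1
  ext k l
  have := congrFun (congrFun h k) l
  simpa using this

private lemma hasDerivAt_det_covD (n d : ℕ) (hn : 2 ≤ n) (Y : Matrix (Fin n) (Fin d) ℝ)
    (i : Fin n) (j : Fin d) (hinv : IsUnit (covD n d Y).det)
    (huj : ((covD n d Y)⁻¹ *ᵥ fun l => Y i l - meanD n d Y l) j = 0) :
    HasDerivAt
      (fun t : ℝ => (covD n d (Y.updateRow i (Function.update (Y i) j t))).det)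
      0 (Y i j) := by
  classical
  have hn0 : (n : ℝ) ≠ 0 := Nat.cast_ne_zero.2 (by omega)
  set y : ℝ := Y i j with hyd
  set S : Matrix (Fin d) (Fin d) ℝ := covD n d Y with hSd
  set w : Fin n → Fin d → ℝ := fun m l => Y m l - meanD n d Y l with hwd
  set E : Fin d → ℝ := fun l => if l = j then 1 else 0 with hEd
  set X : ℝ → Matrix (Fin n) (Fin d) ℝ :=
    fun t => Y.updateRow i (Function.update (Y i) j t) with hXd
  set c1 : ℝ := ((n : ℝ) - 1)⁻¹ with hc1d
  set Bm : Matrix (Fin d) (Fin d) ℝ :=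
    fun k l => c1 * (E l * w i k + E k * w i l) with hBmd
  set Cm : Matrix (Fin d) (Fin d) ℝ :=
    fun k l => c1 * (1 - (n : ℝ)⁻¹) * E k * E l with hCmd
  -- entries of updated matrix
  have hXe : ∀ t m l, X t m l = Y m l + (t - y) * ((if m = i then 1 else 0) * E l) := by
    intro t m l
    rcases eq_or_ne m i with rfl | hm
    · rcases eq_or_ne l j with rfl | hl
      · simp [hXd, hEd]
        try ring
      · simp [hXd, hEd, Function.update_of_ne hl, hl]
    · simp [hXd, hEd, Matrix.updateRow_ne hm, hm]
  have hmean_apply : ∀ (Z : Matrix (Fin n) (Fin d) ℝ) l,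
      meanD n d Z l = (n : ℝ)⁻¹ * ∑ m, Z m l := by
    intro Z l; simp [meanD, Finset.sum_apply]; left; exact Finset.sum_apply l _ _
  have hmeanX : ∀ t l, meanD n d (X t) l = meanD n d Y l + (t - y) * ((n : ℝ)⁻¹ * E l) := by
    intro t l
    rw [hmean_apply, hmean_apply]
    have hsum : ∑ m, X t m l = (∑ m, Y m l) + (t - y) * E l := by
      rw [Finset.sum_congr rfl fun m _ => hXe t m l, Finset.sum_add_distrib]
      congr 1
      rw [← Finset.mul_sum]
      have : ∑ m, (if m = i then (1:ℝ) else 0) * E l = E l := by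
        simp [ite_mul]
      rw [this]
    rw [hsum]; ring
  have hcent : ∀ t m l, X t m l - meanD n d (X t) l
      = w m l + (t - y) * (((if m = i then 1 else 0) - (n : ℝ)⁻¹) * E l) := by
    intro t m l
    rw [hXe, hmeanX, hwd]
    show _ = Y m l - meanD n d Y l + _
    ring
  have hw0 : ∀ l, ∑ m, w m l = 0 := by
    intro l
    rw [hwd]
    show ∑ m : Fin n, (Y m l - meanD n d Y l) = 0
    rw [Finset.sum_sub_distrib, Finset.sum_const, Finset.card_univ, Fintype.card_fin,
      hmean_apply, nsmul_eq_mul]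
    field_simp
    ring
  have hsum_ite : ∀ (f : Fin n → ℝ), ∑ m, (if m = i then (1:ℝ) else 0) * f m = f i := by
    intro f; simp [ite_mul]
  have hsq : ∑ m, ((if m = i then (1:ℝ) else 0) - (n : ℝ)⁻¹)^2 = 1 - (n : ℝ)⁻¹ := by
    have hstep : ∀ m : Fin n, ((if m = i then (1:ℝ) else 0) - (n:ℝ)⁻¹)^2
        = (if m = i then (1 - 2*(n:ℝ)⁻¹) else 0) + ((n:ℝ)⁻¹)^2 := by
      intro m; split <;> ring
    rw [Finset.sum_congr rfl fun m _ => hstep m, Finset.sum_add_distrib, Finset.sum_const,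
      Finset.card_univ, Fintype.card_fin, nsmul_eq_mul, Finset.sum_ite_eq']
    simp only [Finset.mem_univ, if_true]
    field_simp
    ring
  -- entry expansion
  have hFE : ∀ t k l, covD n d (X t) k l
      = S k l + (t - y) * Bm k l + (t - y)^2 * Cm k l := by
    intro t k l
    rw [covD_entry]
    have hexp : ∑ m, (X t m k - meanD n d (X t) k) * (X t m l - meanD n d (X t) l)
        = (∑ m, w m k * w m l) + (t - y) * (E l * w i k + E k * w i l)
          + (t - y)^2 * ((1 - (n:ℝ)⁻¹) * (E k * E l)) := by
      have hstep : ∀ m, (X t m k - meanD n d (X t) k) * (X t m l - meanD n d (X t) l)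
          = w m k * w m l
            + ((t-y)*E l) * ((if m = i then (1:ℝ) else 0) * w m k)
            + ((t-y)*E k) * ((if m = i then (1:ℝ) else 0) * w m l)
            + (-((t-y)*E l*(n:ℝ)⁻¹)) * w m k
            + (-((t-y)*E k*(n:ℝ)⁻¹)) * w m l
            + ((t-y)^2*(E k*E l)) * (((if m = i then (1:ℝ) else 0) - (n:ℝ)⁻¹)^2) := by
        intro m
        rw [hcent t m k, hcent t m l]
        ring
      rw [Finset.sum_congr rfl fun m _ => hstep m]
      rw [Finset.sum_add_distrib, Finset.sum_add_distrib, Finset.sum_add_distrib,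
        Finset.sum_add_distrib, Finset.sum_add_distrib,
        ← Finset.mul_sum, ← Finset.mul_sum, ← Finset.mul_sum, ← Finset.mul_sum, ← Finset.mul_sum,
        hsum_ite (fun m => w m k), hsum_ite (fun m => w m l), hw0 k, hw0 l, hsq]
      ring
    rw [hexp]
    have hSkl : S k l = c1 * ∑ m, w m k * w m l := by
      rw [hSd, covD_entry]
    rw [hSkl, hBmd, hCmd]
    show _ = c1 * _ + (t-y) * (c1 * (E l * w i k + E k * w i l))
      + (t-y)^2 * (c1 * (1 - (n:ℝ)⁻¹) * E k * E l)
    ring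
  -- entrywise derivatives
  have hder : ∀ k l, HasDerivAt (fun t => covD n d (X t) k l) (Bm k l) y := by
    intro k l
    have h1 : HasDerivAt (fun t : ℝ => t - y) 1 y := by
      simpa using (hasDerivAt_id y).sub_const y
    have hA : HasDerivAt (fun t => (t - y) * Bm k l) (Bm k l) y := by
      simpa using h1.mul_const (Bm k l)
    have hB : HasDerivAt (fun t => (t - y)^2 * Cm k l) 0 y := by
      have := (h1.pow 2).mul_const (Cm k l)
      simpa using this
    have hsum := ((hasDerivAt_const y (S k l)).add hA).add hB
    have hfun : (fun t => covD n d (X t) k l)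
        = fun t => S k l + (t - y) * Bm k l + (t - y)^2 * Cm k l :=
      funext fun t => hFE t k l
    rw [hfun]
    simp only [zero_add, add_zero] at hsum; exact hsum
  -- rows
  have hrow : HasDerivAt (fun t => (fun k : Fin d => covD n d (X t) k))
      (fun k => Bm k) y := by
    rw [hasDerivAt_pi]
    intro k
    rw [hasDerivAt_pi]
    intro l
    exact hder k l
  have hXy : X y = Y := by
    rw [hXd]
    show Y.updateRow i (Function.update (Y i) j (Y i j)) = Y
    rw [Function.update_eq_self, Matrix.updateRow_eq_self]
  have hF := (detCML d).hasFDerivAt (x := fun k : Fin d => covD n d (X y) k)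
  have hcomp := hF.comp_hasDerivAt y hrow
  -- compute the derivative value
  have hval : (detCML d).linearDeriv (fun k : Fin d => covD n d (X y) k) (fun k => Bm k) = 0 := by
    rw [hXy, ContinuousMultilinearMap.linearDeriv_apply]
    have hterm : ∀ k : Fin d,
        (detCML d) (Function.update (fun k' : Fin d => covD n d Y k') k (Bm k))
          = ((covD n d Y).updateRow k (Bm k)).det := fun k => rfl
    rw [Finset.sum_congr rfl fun k _ => hterm k]
    have hBrow : ∀ k : Fin d, Bm k
        = (c1 * w i k) • (Pi.single j 1 : Fin d → ℝ) + (c1 * E k) • (w i) := by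
      intro k
      funext l
      simp only [hBmd, Pi.add_apply, Pi.smul_apply, smul_eq_mul, Pi.single_apply, hEd]
      by_cases hl : l = j <;> by_cases hk : k = j <;> simp [hl, hk] <;> ring
    have hsplit : ∀ k : Fin d, ((covD n d Y).updateRow k (Bm k)).det
        = c1 * w i k * ((covD n d Y).updateRow k (Pi.single j 1)).det
          + c1 * E k * ((covD n d Y).updateRow k (w i)).det := by
      intro k
      rw [hBrow k, Matrix.det_updateRow_add, Matrix.det_updateRow_smul, Matrix.det_updateRow_smul]
    rw [Finset.sum_congr rfl fun k _ => hsplit k, Finset.sum_add_distrib]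
    -- first sum
    have hfirst : ∑ k : Fin d, c1 * w i k * ((covD n d Y).updateRow k (Pi.single j 1)).det
        = c1 * (((covD n d Y).adjugate *ᵥ (w i)) j) := by
      calc ∑ k : Fin d, c1 * w i k * ((covD n d Y).updateRow k (Pi.single j 1)).det
          = ∑ k : Fin d, c1 * ((covD n d Y).adjugate j k * w i k) := by
            refine Finset.sum_congr rfl fun k _ => ?_
            rw [Matrix.adjugate_apply]
            ring
        _ = c1 * ∑ k : Fin d, (covD n d Y).adjugate j k * w i k := (Finset.mul_sum _ _ _).symm
        _ = c1 * (((covD n d Y).adjugate *ᵥ (w i)) j) := rfl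
    have hadj : ((covD n d Y).adjugate *ᵥ (w i))
        = (covD n d Y).det • ((covD n d Y)⁻¹ *ᵥ (w i)) := by
      rw [Matrix.inv_def, Matrix.smul_mulVec, smul_smul,
        Ring.inverse_eq_inv, mul_inv_cancel₀ (by simpa [isUnit_iff_ne_zero] using hinv), one_smul]
    -- second sum
    have hsecond : ∑ k : Fin d, c1 * E k * ((covD n d Y).updateRow k (w i)).det
        = c1 * ((covD n d Y).updateRow j (w i)).det := by
      have hstep : ∀ k : Fin d, c1 * E k * ((covD n d Y).updateRow k (w i)).det
          = if k = j then c1 * ((covD n d Y).updateRow k (w i)).det else 0 := by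
        intro k
        rw [hEd]
        show c1 * (if k = j then (1:ℝ) else 0) * _ = _
        rcases eq_or_ne k j with rfl | hk
        · simp
        · simp [hk]
      rw [Finset.sum_congr rfl fun k _ => hstep k, Finset.sum_ite_eq']
      simp
    have hupd : ((covD n d Y).updateRow j (w i)).det
        = (covD n d Y).det * (((covD n d Y)⁻¹ *ᵥ (w i)) j) := by
      have h1 : (covD n d Y).updateRow j (w i)
          = (((covD n d Y)ᵀ).updateCol j (w i))ᵀ := by
        rw [Matrix.updateCol_transpose, Matrix.transpose_transpose]
      rw [h1, Matrix.det_transpose, ← Matrix.cramer_apply, covD_symm n d hn]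
      have hcr : (covD n d Y).cramer (w i)
          = (covD n d Y).det • ((covD n d Y)⁻¹ *ᵥ (w i)) := by
        have h2 := Matrix.mulVec_cramer (covD n d Y) (w i)
        have h3 : (covD n d Y)⁻¹ *ᵥ ((covD n d Y) *ᵥ (covD n d Y).cramer (w i))
            = (covD n d Y)⁻¹ *ᵥ ((covD n d Y).det • (w i)) := by rw [h2]
        rw [Matrix.mulVec_mulVec, Matrix.nonsing_inv_mul _ hinv, Matrix.one_mulVec,
          Matrix.mulVec_smul] at h3
        exact h3
      rw [hcr]
      simp [smul_eq_mul]
    rw [hfirst, hsecond, hadj, hupd]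
    have hu0 : ((covD n d Y)⁻¹ *ᵥ (w i)) j = 0 := by
      rw [hwd]; exact huj
    simp [hu0]
  rw [hval] at hcomp
  exact hcomp

/-- If every incomplete row of `Y` is imputed by the conditional mean given its
observed coordinates (with the sample moments of `Y`), then `Y` is a stationary point of the
covariance determinant with respect to each missing entry. -/
theorem conditional_mean_imputation_is_stationary_point
    (n d : ℕ) (hn : 2 ≤ n)
    (Y : Matrix (Fin n) (Fin d) ℝ)
    (M : Finset (Fin n × Fin d)) :
    let mean : Matrix (Fin n) (Fin d) ℝ → (Fin d → ℝ) := fun X => (n : ℝ)⁻¹ • ∑ i, X i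
    let cov : Matrix (Fin n) (Fin d) ℝ → Matrix (Fin d) (Fin d) ℝ :=
      fun X => ((n : ℝ) - 1)⁻¹ • ∑ i, vecMulVec (X i - mean X) (X i - mean X)
    ∀ (_hinv : IsUnit (cov Y).det)
      (_himp : ∀ i : Fin n, ∀ j : {j : Fin d // (i, j) ∈ M},
        Y i j.1 = mean Y j.1 +
          (((cov Y).submatrix (fun a : {j : Fin d // (i, j) ∈ M} => a.1)
              (fun a : {j : Fin d // (i, j) ∉ M} => a.1) *ᵥ
            (((cov Y).submatrix (fun a : {j : Fin d // (i, j) ∉ M} => a.1)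
              (fun a : {j : Fin d // (i, j) ∉ M} => a.1))⁻¹ *ᵥ
              fun l : {j : Fin d // (i, j) ∉ M} => Y i l.1 - mean Y l.1)) j)),
    ∀ i j, (i, j) ∈ M →
      HasDerivAt (fun t : ℝ => (cov (Y.updateRow i (Function.update (Y i) j t))).det)
        0 (Y i j) := by
  intro mean cov hinv himp i j hij
  have hinv' : IsUnit (covD n d Y).det := hinv
  have hkey : ((covD n d Y)⁻¹ *ᵥ fun l => Y i l - meanD n d Y l) j = 0 := by
    refine key_vanish (covD n d Y) (covD_posSemidef n d hn Y) hinv'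
      (fun x => (i, x) ∈ M) (fun l => Y i l - meanD n d Y l) ?_ ⟨j, hij⟩
    intro jA
    have h := himp i jA
    have h2 : Y i jA.1 - mean Y jA.1 =
        ((cov Y).submatrix (fun a : {j : Fin d // (i, j) ∈ M} => a.1)
            (fun a : {j : Fin d // (i, j) ∉ M} => a.1) *ᵥ
          (((cov Y).submatrix (fun a : {j : Fin d // (i, j) ∉ M} => a.1)
            (fun a : {j : Fin d // (i, j) ∉ M} => a.1))⁻¹ *ᵥ
            fun l : {j : Fin d // (i, j) ∉ M} => Y i l.1 - mean Y l.1)) jA := by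
      rw [h]; ring
    exact h2
  exact hasDerivAt_det_covD n d hn Y i j hinv' hkey
end

section
/- Let d ≥ 2, let λ ∈ ℝ^d with λ_s > 0 for all s, let V be a d×d real orthogonal matrix, and set Σ = V diag(λ) Vᵀ (a symmetric positive definite matrix). Let c ∈ ℝ^d and y = V diag(√λ_1, …, √λ_d) c. Then the following are equivalent: (i) y_d = Σ_{d,−d} (Σ_{−d,−d})⁻¹ y_{−d} (the last coordinate equals its regression fit on the others); (ii) Σ_{s=1}^d c_s V_{d,s} / √λ_s = 0; (iii) for every σ² with 0 < σ² ≤ min_s λ_s, y_d = Σ_{s=1}^d c_s ((λ_s − σ²)/√λ_s) V_{d,s} (the regularized-PCA reconstruction of coordinate d); (iv) there exists σ² ≠ 0 such that y_d = Σ_{s=1}^d c_s ((λ_s − σ²)/√λ_s) V_{d,s}. -/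
open Matrix

/-- Auxiliary: for a positive definite `S`, the regression identity for the last coordinate
of `S *ᵥ x` holds iff `x` vanishes at the last coordinate. -/
lemma reg_iff_aux (n : ℕ) (S : Matrix (Fin (n + 1)) (Fin (n + 1)) ℝ) (hS : S.PosDef)
    (x : Fin (n + 1) → ℝ) :
    ((S *ᵥ x) (Fin.last n) =
      (fun j : Fin n => S (Fin.last n) j.castSucc) ⬝ᵥ
        ((S.submatrix Fin.castSucc Fin.castSucc)⁻¹ *ᵥ fun j => (S *ᵥ x) j.castSucc))
    ↔ x (Fin.last n) = 0 := by
  set l : Fin (n + 1) := Fin.last n with hl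
  set A : Matrix (Fin n) (Fin n) ℝ := S.submatrix Fin.castSucc Fin.castSucc with hA
  set b : Fin n → ℝ := fun j => S l j.castSucc with hb
  set x' : Fin n → ℝ := fun j => x j.castSucc with hx'
  have hsym : ∀ i j, S i j = S j i := by
    intro i j
    conv_lhs => rw [← hS.1]
    simp [Matrix.conjTranspose_apply]
  -- A is positive definite
  have hApd : A.PosDef := by
    rw [Matrix.posDef_iff_dotProduct_mulVec]; constructor
    · ext i j
      simp [A, Matrix.conjTranspose_apply, hsym]
    · intro v hv
      have hw : (Fin.snoc v 0 : Fin (n + 1) → ℝ) ≠ 0 := by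
        intro h
        apply hv
        funext j
        have := congrFun h j.castSucc
        simpa using this
      have := hS.dotProduct_mulVec_pos hw
      have hcalc : star (Fin.snoc v 0 : Fin (n + 1) → ℝ) ⬝ᵥ
          (S *ᵥ (Fin.snoc v 0 : Fin (n + 1) → ℝ)) = star v ⬝ᵥ (A *ᵥ v) := by
        simp only [star_trivial, Matrix.mulVec, dotProduct]
        rw [Fin.sum_univ_castSucc]
        simp only [Fin.snoc_castSucc, Fin.snoc_last, zero_mul, add_zero]
        refine Finset.sum_congr rfl fun j _ => ?_
        congr 1
        rw [Fin.sum_univ_castSucc]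
        simp [A]
      rw [hcalc] at this
      exact this
  have hdet : IsUnit A.det := (Matrix.isUnit_iff_isUnit_det A).mp hApd.isUnit
  have hAinv : A⁻¹ * A = 1 := Matrix.nonsing_inv_mul A hdet
  have hAinv' : A * A⁻¹ = 1 := Matrix.mul_nonsing_inv A hdet
  -- decomposition of (S *ᵥ x)
  have hsub : (fun j => (S *ᵥ x) j.castSucc) = A *ᵥ x' + x l • b := by
    funext j
    simp only [Matrix.mulVec, dotProduct, Pi.add_apply, Pi.smul_apply, smul_eq_mul,
      Matrix.submatrix_apply, A, x', b]
    rw [Fin.sum_univ_castSucc, hsym j.castSucc l]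
    ring
  have hlast : (S *ᵥ x) l = b ⬝ᵥ x' + S l l * x l := by
    simp only [Matrix.mulVec, dotProduct]
    rw [Fin.sum_univ_castSucc]
  -- the Schur complement is positive
  have hschur : 0 < S l l - b ⬝ᵥ (A⁻¹ *ᵥ b) := by
    set w : Fin (n + 1) → ℝ := Fin.snoc (fun j => -(A⁻¹ *ᵥ b) j) 1 with hwdef
    have hw : w ≠ 0 := by
      intro h
      have := congrFun h l
      simp [w, hl] at this
    have hpos := hS.dotProduct_mulVec_pos hw
    have hSw : ∀ j : Fin n, (S *ᵥ w) j.castSucc = 0 := by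
      intro j
      simp only [Matrix.mulVec, dotProduct]
      rw [Fin.sum_univ_castSucc]
      simp only [hwdef, Fin.snoc_castSucc, Fin.snoc_last, mul_one]
      have : ∑ k : Fin n, S j.castSucc k.castSucc * -(A⁻¹ *ᵥ b) k
          = -(A *ᵥ (A⁻¹ *ᵥ b)) j := by
        simp [Matrix.mulVec, dotProduct, A, Finset.sum_neg_distrib]
      rw [this, Matrix.mulVec_mulVec, hAinv', Matrix.one_mulVec]
      rw [hsym]
      ring
    have hSwl : (S *ᵥ w) l = S l l - b ⬝ᵥ (A⁻¹ *ᵥ b) := by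
      simp only [Matrix.mulVec, dotProduct, w]
      rw [Fin.sum_univ_castSucc]
      simp only [Fin.snoc_castSucc, Fin.snoc_last, mul_one, mul_neg,
        Finset.sum_neg_distrib, b]
      rw [show (Fin.last n) = l from rfl]
      ring
    have hcalc : star w ⬝ᵥ (S *ᵥ w) = S l l - b ⬝ᵥ (A⁻¹ *ᵥ b) := by
      simp only [star_trivial, dotProduct]
      rw [Fin.sum_univ_castSucc]
      simp only [hSw, mul_zero, Finset.sum_const_zero, zero_add]
      rw [hwdef]
      simp only [Fin.snoc_last, one_mul]
      rw [← hwdef, hSwl]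
      rfl
    rw [hcalc] at hpos
    exact hpos
  -- main computation
  have hrhs : (fun j : Fin n => S l j.castSucc) ⬝ᵥ (A⁻¹ *ᵥ fun j => (S *ᵥ x) j.castSucc)
      = b ⬝ᵥ x' + x l * (b ⬝ᵥ (A⁻¹ *ᵥ b)) := by
    rw [hsub, Matrix.mulVec_add, Matrix.mulVec_smul, Matrix.mulVec_mulVec, hAinv,
      Matrix.one_mulVec, dotProduct_add, dotProduct_smul]
    simp [smul_eq_mul]; rfl
  constructor
  · intro h
    rw [hrhs, hlast] at h
    have : x l * (S l l - b ⬝ᵥ (A⁻¹ *ᵥ b)) = 0 := by linarith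
    rcases mul_eq_zero.mp this with h' | h'
    · exact h'
    · exact absurd h' (ne_of_gt hschur)
  · intro h
    rw [hrhs, hlast, h]
    ring


/-- For `Σ = V diag(λ) Vᵀ` with `V` orthogonal, `λ > 0`, and
`y = V diag(√λ) c`, the regression fit of the last coordinate, the orthogonality condition
`∑ c_s V_{d,s}/√λ_s = 0`, and the regularized-PCA reconstructions are all equivalent. -/
theorem regression_eq_regularized_PCA
    (e : ℕ) (lam : Fin (e + 2) → ℝ) (hlam : ∀ s, 0 < lam s)
    (V : Matrix (Fin (e + 2)) (Fin (e + 2)) ℝ) (hV : Vᵀ * V = 1)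
    (c : Fin (e + 2) → ℝ) :
    let S : Matrix (Fin (e + 2)) (Fin (e + 2)) ℝ := V * Matrix.diagonal lam * Vᵀ
    let y : Fin (e + 2) → ℝ := V *ᵥ fun s => Real.sqrt (lam s) * c s
    let l : Fin (e + 2) := Fin.last (e + 1)
    let Ssub : Matrix (Fin (e + 1)) (Fin (e + 1)) ℝ := S.submatrix Fin.castSucc Fin.castSucc
    List.TFAE [
      y l = (fun j : Fin (e + 1) => S l j.castSucc) ⬝ᵥ (Ssub⁻¹ *ᵥ fun j => y j.castSucc),
      ∑ s, c s * V l s / Real.sqrt (lam s) = 0,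
      ∀ σ2 : ℝ, 0 < σ2 → (∀ s, σ2 ≤ lam s) →
        y l = ∑ s, c s * ((lam s - σ2) / Real.sqrt (lam s)) * V l s,
      ∃ σ2 : ℝ, σ2 ≠ 0 ∧ y l = ∑ s, c s * ((lam s - σ2) / Real.sqrt (lam s)) * V l s ] := by
  intro S y l Ssub
  have hsq : ∀ s, Real.sqrt (lam s) * Real.sqrt (lam s) = lam s :=
    fun s => Real.mul_self_sqrt (hlam s).le
  have hsqpos : ∀ s, 0 < Real.sqrt (lam s) := fun s => Real.sqrt_pos.mpr (hlam s)
  set x : Fin (e + 2) → ℝ := V *ᵥ (fun s => c s / Real.sqrt (lam s)) with hxdef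
  have hVVt : V * Vᵀ = 1 := mul_eq_one_comm.mp hV
  -- S *ᵥ x = y
  have hy : S *ᵥ x = y := by
    rw [hxdef, Matrix.mulVec_mulVec]
    have : S * V = V * Matrix.diagonal lam := by
      rw [show S = V * Matrix.diagonal lam * Vᵀ from rfl, Matrix.mul_assoc,
        Matrix.mul_assoc, hV, Matrix.mul_one]
    rw [this, ← Matrix.mulVec_mulVec]
    have harg : (Matrix.diagonal lam *ᵥ fun s => c s / Real.sqrt (lam s))
        = fun s => Real.sqrt (lam s) * c s := by
      funext s
      simp only [Matrix.mulVec_diagonal]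
      rw [← hsq s]
      field_simp
      rw [Real.sqrt_sq (hsqpos s).le, pow_two, mul_assoc, mul_div_assoc, mul_div_cancel_left₀ _ (hsqpos s).ne', mul_comm]
    rw [harg]
  -- x at the last coordinate equals the sum in statement 2
  have hxl : x l = ∑ s, c s * V l s / Real.sqrt (lam s) := by
    simp only [hxdef, Matrix.mulVec, dotProduct]
    refine Finset.sum_congr rfl fun s _ => ?_
    ring
  -- S is positive definite
  have hSpd : S.PosDef := by
    rw [Matrix.posDef_iff_dotProduct_mulVec]; constructor
    · show Sᴴ = S
      rw [show S = V * Matrix.diagonal lam * Vᵀ from rfl]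
      rw [Matrix.conjTranspose_eq_transpose_of_trivial, Matrix.transpose_mul,
        Matrix.transpose_mul, Matrix.transpose_transpose, Matrix.diagonal_transpose,
        Matrix.mul_assoc]
    · intro z hz
      set u : Fin (e + 2) → ℝ := Vᵀ *ᵥ z with hu
      have hune : u ≠ 0 := by
        intro h
        apply hz
        have : (V * Vᵀ) *ᵥ z = V *ᵥ u := by rw [← Matrix.mulVec_mulVec]
        rw [hVVt, Matrix.one_mulVec] at this
        rw [this, h, Matrix.mulVec_zero]
      have hcalc : star z ⬝ᵥ (S *ᵥ z) = ∑ s, lam s * (u s * u s) := by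
        rw [star_trivial]
        rw [show S = V * Matrix.diagonal lam * Vᵀ from rfl, ← Matrix.mulVec_mulVec,
          ← Matrix.mulVec_mulVec, dotProduct_mulVec, ← Matrix.mulVec_transpose]
        rw [← hu]
        simp only [Matrix.mulVec_diagonal, dotProduct]
        refine Finset.sum_congr rfl fun s _ => ?_
        ring
      rw [hcalc]
      obtain ⟨s0, hs0⟩ := Function.ne_iff.mp hune
      have hs0' : u s0 ≠ 0 := by simpa using hs0
      exact Finset.sum_pos' (fun s _ => mul_nonneg (hlam s).le (mul_self_nonneg _))
        ⟨s0, Finset.mem_univ s0, mul_pos (hlam s0) (mul_self_pos.mpr hs0')⟩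
  -- sum identity for statements 3/4
  have hyl : y l = ∑ s, V l s * (Real.sqrt (lam s) * c s) := rfl
  have hsum : ∀ σ2 : ℝ, ∑ s, c s * ((lam s - σ2) / Real.sqrt (lam s)) * V l s
      = y l - σ2 * ∑ s, c s * V l s / Real.sqrt (lam s) := by
    intro σ2
    rw [hyl, Finset.mul_sum, ← Finset.sum_sub_distrib]
    refine Finset.sum_congr rfl fun s _ => ?_
    rw [sub_div, Real.div_sqrt]
    ring
  tfae_have 1 ↔ 2 := by
    have h := reg_iff_aux (e + 1) S hSpd x
    rw [hy] at h
    rw [show (∑ s, c s * V l s / Real.sqrt (lam s)) = x l from hxl.symm]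
    exact h
  tfae_have 2 → 3 := by
    intro h2 σ2 _ _
    rw [hsum, h2, mul_zero, sub_zero]
  tfae_have 3 → 4 := by
    intro h3
    set m := Finset.univ.inf' Finset.univ_nonempty lam with hm
    have hmpos : 0 < m := by
      rw [hm, Finset.lt_inf'_iff]
      exact fun s _ => hlam s
    exact ⟨m, hmpos.ne', h3 m hmpos fun s => Finset.inf'_le _ (Finset.mem_univ s)⟩
  tfae_have 4 → 2 := by
    rintro ⟨σ2, hσ, h⟩
    rw [hsum] at h
    have h0 : σ2 * ∑ s, c s * V l s / Real.sqrt (lam s) = 0 := by linarith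
    exact (mul_eq_zero.mp h0).resolve_left hσ
  tfae_finish
end
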